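/- arXiv:1710.06505 — 4 statements merged into one kernel-verified Lean document; each statement's English description precedes it below -/
import Mathlib

section
/- The cluster mutation map μ_k on (ℂ*)^J preserves the log-canonical Poisson bracket: if {X_i, X_j} = ε_{ij}X_iX_j and X′ = μ_k(X) with mutated exchange matrix ε′ (given by the standard matrix mutation rule ε′_{ij} = −ε_{ij} if i = k or j = k, and ε′_{ij} = ε_{ij} + (|ε_{ik}|ε_{kj} + ε_{ik}|ε_{kj}|)/2 otherwise), then {X′_i, X′_j} = ε′_{ij}X′_iX′_j. -/
noncomputable def clusterMut {J : Type*} [DecidableEq J] (ε : J → J → ℤ) (k : J)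
    (X : J → ℂ) : J → ℂ :=
  fun j => if j = k then (X k)⁻¹ else X j * (1 + X k ^ (-(ε j k).sign)) ^ (-(ε j k))

lemma deriv_aux (m n : ℤ) (x : ℂ) (hx : x ≠ 0) (hb : 1 + x ^ m ≠ 0) :
    HasDerivAt (fun t : ℂ => (1 + t ^ m) ^ n)
      (((n : ℂ) * (1 + x ^ m) ^ (n - 1)) * ((m : ℂ) * x ^ (m - 1))) x := by
  have h1 : HasDerivAt (fun t : ℂ => 1 + t ^ m) ((m : ℂ) * x ^ (m - 1)) x :=
    (hasDerivAt_zpow m x (Or.inl hx)).const_add 1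
  have h2 : HasDerivAt (fun s : ℂ => s ^ n) ((n : ℂ) * (1 + x ^ m) ^ (n - 1)) (1 + x ^ m) :=
    hasDerivAt_zpow n _ (Or.inl hb)
  exact h2.comp x h1

lemma fder {J : Type*} [Fintype J] [DecidableEq J] (ε : J → J → ℤ) (k : J) (X : J → ℂ)
    (hX : ∀ j, X j ≠ 0) (i a : J) (hb : 1 + X k ^ (-(ε i k).sign : ℤ) ≠ 0) :
    fderiv ℂ (fun Y => clusterMut ε k Y i) X (Pi.single a 1) =
      if i = k then (if k = a then -((X k)^2)⁻¹ else 0)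
      else (if i = a then (1 + X k ^ (-(ε i k).sign : ℤ)) ^ (-(ε i k)) else 0)
        + (if k = a then X i * (((-(ε i k) : ℤ) : ℂ) * (1 + X k ^ (-(ε i k).sign : ℤ)) ^ (-(ε i k) - 1) * (((-(ε i k).sign : ℤ) : ℂ) * X k ^ ((-(ε i k).sign : ℤ) - 1))) else 0) := by
  by_cases hik : i = k
  · have h : HasFDerivAt (fun Y : J → ℂ => clusterMut ε k Y i)
        (-(((X k)^2)⁻¹ • (ContinuousLinearMap.proj (R := ℂ) (φ := fun _ : J => ℂ) k))) X := by
      have := (hasDerivAt_inv (hX k)).comp_hasFDerivAt X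
        (ContinuousLinearMap.proj (R := ℂ) (φ := fun _ : J => ℂ) k).hasFDerivAt
      simpa [clusterMut, hik, Function.comp_def] using this.congr_fderiv (by ext; simp)
    rw [h.fderiv]
    simp [Pi.single_apply, hik]
    split <;> simp
  · have hg : HasFDerivAt (fun Y : J → ℂ => (1 + Y k ^ (-(ε i k).sign : ℤ)) ^ (-(ε i k)))
        (((((-(ε i k) : ℤ) : ℂ) * (1 + X k ^ (-(ε i k).sign : ℤ)) ^ (-(ε i k) - 1)) *
          (((-(ε i k).sign : ℤ) : ℂ) * X k ^ ((-(ε i k).sign : ℤ) - 1))) •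
          (ContinuousLinearMap.proj (R := ℂ) (φ := fun _ : J => ℂ) k)) X := by
      have := (deriv_aux (-(ε i k).sign) (-(ε i k)) (X k) (hX k) hb).comp_hasFDerivAt X
        (ContinuousLinearMap.proj (R := ℂ) (φ := fun _ : J => ℂ) k).hasFDerivAt
      simpa [Function.comp_def] using this
    have hf : HasFDerivAt (fun Y : J → ℂ => Y i)
        (ContinuousLinearMap.proj (R := ℂ) (φ := fun _ : J => ℂ) i) X :=
      (ContinuousLinearMap.proj (R := ℂ) (φ := fun _ : J => ℂ) i).hasFDerivAt
    have hfun : (fun Y => clusterMut ε k Y i)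
        = (fun Y : J → ℂ => Y i * (1 + Y k ^ (-(ε i k).sign : ℤ)) ^ (-(ε i k))) := by
      funext Y; simp [clusterMut, hik]
    rw [hfun, HasFDerivAt.fderiv (f := fun Y : J → ℂ => Y i * (1 + Y k ^ (-(ε i k).sign : ℤ)) ^ (-(ε i k))) (hf.mul hg)]
    simp [Pi.single_apply, hik]
    by_cases hia : i = a <;> by_cases hka : k = a <;> simp [hia, hka] <;> ring

set_option maxHeartbeats 2000000 in
/-- Cluster mutation preserves the log-canonical Poisson structure
`{X_i, X_j} = ε_{ij} X_i X_j`: the bracket of the mutated coordinates, computed from the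
original bracket via the chain rule (partial derivatives of the mutation map), equals
`ε′_{ij} X′_i X′_j`, where `ε′` is the mutated exchange matrix. -/
theorem stmt_5 {J : Type*} [Fintype J] [DecidableEq J] (ε : J → J → ℤ) (k : J)
    (hskew : ∀ i j, ε i j = -ε j i)
    (X : J → ℂ) (hX : ∀ j, X j ≠ 0)
    (h1 : 1 + X k ≠ 0) (h2 : 1 + (X k)⁻¹ ≠ 0)
    (ε' : J → J → ℤ)
    (hε' : ∀ i j, ε' i j = if i = k ∨ j = k then -ε i j
      else ε i j + (|ε i k| * ε k j + ε i k * |ε k j|) / 2) :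
    ∀ i j : J,
      (∑ a : J, ∑ b : J, (ε a b : ℂ) * X a * X b *
          fderiv ℂ (fun Y => clusterMut ε k Y i) X (Pi.single a 1) *
          fderiv ℂ (fun Y => clusterMut ε k Y j) X (Pi.single b 1))
        = (ε' i j : ℂ) * clusterMut ε k X i * clusterMut ε k X j := by
  have hb : ∀ i, 1 + X k ^ (-(ε i k).sign : ℤ) ≠ 0 := by
    intro i
    rcases lt_trichotomy (ε i k) 0 with h | h | h
    · rw [Int.sign_eq_neg_one_iff_neg.mpr h]; simpa using h1
    · rw [h]; norm_num
    · rw [Int.sign_eq_one_iff_pos.mpr h]; simpa using h2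
  have hkk : ε k k = 0 := by have := hskew k k; omega
  intro i j
  rw [show (fun Y => clusterMut ε k Y i) = fun Y => clusterMut ε k Y i from rfl]
  simp only [fun a => fder ε k X hX i a (hb i), fun b => fder ε k X hX j b (hb j)]
  by_cases hik : i = k <;> by_cases hjk : j = k
  · simp only [hik, hjk, if_pos rfl, clusterMut]
    simp [ite_mul, mul_ite, mul_zero, zero_mul, mul_add, add_mul,
      Finset.sum_add_distrib, Finset.sum_ite_eq, hkk, hε']
  · -- i = k, j ≠ k
    simp only [hik, hjk, if_pos rfl, if_neg hjk, clusterMut, ite_mul, mul_ite, mul_zero,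
      zero_mul, mul_add, add_mul, Finset.sum_add_distrib, Finset.sum_ite_eq,
      Finset.mem_univ, if_true, if_false, hkk, Int.cast_zero, hε', true_or]
    push_cast
    field_simp [hX k]
    ring
  · -- i ≠ k, j = k
    simp only [hik, hjk, if_pos rfl, if_neg hik, clusterMut, ite_mul, mul_ite, mul_zero,
      zero_mul, mul_add, add_mul, Finset.sum_add_distrib, Finset.sum_ite_eq,
      Finset.mem_univ, if_true, if_false, hkk, Int.cast_zero, hε', or_true]
    push_cast
    field_simp [hX k]
    ring
  · -- i ≠ k, j ≠ k
    simp only [hik, hjk, if_neg hik, if_neg hjk, clusterMut, ite_mul, mul_ite, mul_zero,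
      zero_mul, mul_add, add_mul, Finset.sum_add_distrib, Finset.sum_ite_eq,
      Finset.mem_univ, if_true, if_false, hkk, Int.cast_zero]
    rcases lt_trichotomy (ε i k) 0 with he | he | he <;>
      rcases lt_trichotomy (ε j k) 0 with hf | hf | hf
    · -- e<0, f<0
      have hsi : (ε i k).sign = -1 := Int.sign_eq_neg_one_iff_neg.mpr he
      have hsj : (ε j k).sign = -1 := Int.sign_eq_neg_one_iff_neg.mpr hf
      have hq : ε' i j = ε i j := by
        rw [hε' i j, if_neg (by tauto), hskew k j, abs_of_neg he,
          abs_of_pos (by omega : (0:ℤ) < -ε j k)]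
        have h0 : -ε i k * -ε j k + ε i k * -ε j k = 0 := by ring
        rw [h0]; simp
      rw [hq, hskew k j]
      simp only [hsi, hsj, neg_neg, Int.cast_one, Int.cast_neg,
        show ((1:ℤ) - 1) = 0 from rfl, zpow_zero, zpow_one, mul_one, one_mul]
      have hAi : (1 + X k) ^ (-ε i k) = (1 + X k) ^ (-ε i k - 1) * (1 + X k) := by
        rw [← zpow_add_one₀ h1]; congr 1; ring
      have hAj : (1 + X k) ^ (-ε j k) = (1 + X k) ^ (-ε j k - 1) * (1 + X k) := by
        rw [← zpow_add_one₀ h1]; congr 1; ring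
      rw [hAi, hAj]
      push_cast
      ring
    · -- e<0, f=0
      have hq : ε' i j = ε i j := by
        rw [hε' i j, if_neg (by tauto), hskew k j, hf]; simp
      rw [hq, hskew k j, hf]
      simp only [Int.sign_zero, neg_zero, zpow_zero, Int.cast_zero, Int.cast_neg,
        zero_mul, mul_zero, mul_one, one_mul, add_zero, zero_add]
      ring
    · -- e<0, f>0
      have hsi : (ε i k).sign = -1 := Int.sign_eq_neg_one_iff_neg.mpr he
      have hsj : (ε j k).sign = 1 := Int.sign_eq_one_iff_pos.mpr hf
      have hq : ε' i j = ε i j + ε i k * ε j k := by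
        rw [hε' i j, if_neg (by tauto), hskew k j, abs_of_neg he, abs_neg, abs_of_pos hf]
        have h0 : -ε i k * -ε j k + ε i k * ε j k = 2 * (ε i k * ε j k) := by ring
        rw [h0, Int.mul_ediv_cancel_left _ two_ne_zero]
      rw [hq, hskew k j]
      simp only [hsi, hsj, neg_neg, Int.cast_one, Int.cast_neg,
        show ((1:ℤ) - 1) = 0 from rfl, zpow_zero, zpow_one, mul_one, one_mul]
      have hxk2 : (X k) ^ ((-1:ℤ) - 1) = (X k)⁻¹ * (X k)⁻¹ := by
        rw [zpow_sub_one₀ (hX k), zpow_neg_one]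
      have hxk1 : (X k) ^ (-1:ℤ) = (X k)⁻¹ := zpow_neg_one _
      rw [hxk2, hxk1]
      have hAi : (1 + X k) ^ (-ε i k) = (1 + X k) ^ (-ε i k - 1) * (1 + X k) := by
        rw [← zpow_add_one₀ h1]; congr 1; ring
      have hAj : (1 + (X k)⁻¹) ^ (-ε j k) = (1 + (X k)⁻¹) ^ (-ε j k - 1) * (1 + (X k)⁻¹) := by
        rw [← zpow_add_one₀ h2]; congr 1; ring
      rw [hAi, hAj]
      push_cast
      set Q := (1 + (X k)⁻¹) ^ (-ε j k - 1) with hQ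
      clear_value Q
      field_simp [hX k]
      ring
    · -- e=0, f<0
      have hq : ε' i j = ε i j := by
        rw [hε' i j, if_neg (by tauto), he]; simp
      rw [hq, he]
      simp only [Int.sign_zero, neg_zero, zpow_zero, Int.cast_zero, Int.cast_neg,
        zero_mul, mul_zero, mul_one, one_mul, add_zero, zero_add]
      ring
    · -- e=0, f=0
      have hq : ε' i j = ε i j := by
        rw [hε' i j, if_neg (by tauto), he]; simp
      rw [hq, he]
      simp only [Int.sign_zero, neg_zero, zpow_zero, Int.cast_zero, Int.cast_neg,
        zero_mul, mul_zero, mul_one, one_mul, add_zero, zero_add]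
      ring
    · -- e=0, f>0
      have hq : ε' i j = ε i j := by
        rw [hε' i j, if_neg (by tauto), he]; simp
      rw [hq, he]
      simp only [Int.sign_zero, neg_zero, zpow_zero, Int.cast_zero, Int.cast_neg,
        zero_mul, mul_zero, mul_one, one_mul, add_zero, zero_add]
      ring
    · -- e>0, f<0
      have hsi : (ε i k).sign = 1 := Int.sign_eq_one_iff_pos.mpr he
      have hsj : (ε j k).sign = -1 := Int.sign_eq_neg_one_iff_neg.mpr hf
      have hq : ε' i j = ε i j - ε i k * ε j k := by
        rw [hε' i j, if_neg (by tauto), hskew k j, abs_of_pos he, abs_neg, abs_of_neg hf]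
        have h0 : ε i k * -ε j k + ε i k * -ε j k = 2 * (-(ε i k * ε j k)) := by ring
        rw [h0, Int.mul_ediv_cancel_left _ two_ne_zero]
        ring
      rw [hq, hskew k j]
      simp only [hsi, hsj, neg_neg, Int.cast_one, Int.cast_neg,
        show ((1:ℤ) - 1) = 0 from rfl, zpow_zero, zpow_one, mul_one, one_mul]
      have hxk2 : (X k) ^ ((-1:ℤ) - 1) = (X k)⁻¹ * (X k)⁻¹ := by
        rw [zpow_sub_one₀ (hX k), zpow_neg_one]
      have hxk1 : (X k) ^ (-1:ℤ) = (X k)⁻¹ := zpow_neg_one _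
      rw [hxk2, hxk1]
      have hAi : (1 + (X k)⁻¹) ^ (-ε i k) = (1 + (X k)⁻¹) ^ (-ε i k - 1) * (1 + (X k)⁻¹) := by
        rw [← zpow_add_one₀ h2]; congr 1; ring
      have hAj : (1 + X k) ^ (-ε j k) = (1 + X k) ^ (-ε j k - 1) * (1 + X k) := by
        rw [← zpow_add_one₀ h1]; congr 1; ring
      rw [hAi, hAj]
      push_cast
      set P := (1 + (X k)⁻¹) ^ (-ε i k - 1) with hP
      clear_value P
      field_simp [hX k]
      ring
    · -- e>0, f=0
      have hq : ε' i j = ε i j := by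
        rw [hε' i j, if_neg (by tauto), hskew k j, hf]; simp
      rw [hq, hskew k j, hf]
      simp only [Int.sign_zero, neg_zero, zpow_zero, Int.cast_zero, Int.cast_neg,
        zero_mul, mul_zero, mul_one, one_mul, add_zero, zero_add]
      ring
    · -- e>0, f>0
      have hsi : (ε i k).sign = 1 := Int.sign_eq_one_iff_pos.mpr he
      have hsj : (ε j k).sign = 1 := Int.sign_eq_one_iff_pos.mpr hf
      have hq : ε' i j = ε i j := by
        rw [hε' i j, if_neg (by tauto), hskew k j, abs_of_pos he, abs_neg, abs_of_pos hf]
        have h0 : ε i k * -ε j k + ε i k * ε j k = 0 := by ring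
        rw [h0]; simp
      rw [hq, hskew k j]
      simp only [hsi, hsj, neg_neg, Int.cast_one, Int.cast_neg,
        show ((1:ℤ) - 1) = 0 from rfl, zpow_zero, zpow_one, mul_one, one_mul]
      have hxk2 : (X k) ^ ((-1:ℤ) - 1) = (X k)⁻¹ * (X k)⁻¹ := by
        rw [zpow_sub_one₀ (hX k), zpow_neg_one]
      have hxk1 : (X k) ^ (-1:ℤ) = (X k)⁻¹ := zpow_neg_one _
      rw [hxk2, hxk1]
      have hAi : (1 + (X k)⁻¹) ^ (-ε i k) = (1 + (X k)⁻¹) ^ (-ε i k - 1) * (1 + (X k)⁻¹) := by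
        rw [← zpow_add_one₀ h2]; congr 1; ring
      have hAj : (1 + (X k)⁻¹) ^ (-ε j k) = (1 + (X k)⁻¹) ^ (-ε j k - 1) * (1 + (X k)⁻¹) := by
        rw [← zpow_add_one₀ h2]; congr 1; ring
      rw [hAi, hAj]
      push_cast
      set P := (1 + (X k)⁻¹) ^ (-ε i k - 1) with hP
      set Q := (1 + (X k)⁻¹) ^ (-ε j k - 1) with hQ
      clear_value P Q
      ring
end

section
/- Let p₁, …, p_{n+3} (n ≥ 0) be cyclically ordered marked points and let ψ : {p₁, …, p_{n+3}} → ℂP¹ satisfy: (i) ψ(p_i) ≠ ψ(p_{i+1}) for all i (indices mod n+3), and (ii) the image of ψ contains at least three distinct points. Then there exists an ideal triangulation T of the (n+3)-gon such that for every edge (diagonal or side) of T, ψ assigns distinct points of ℂP¹ to its two endpoints. -/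
open OnePoint

/-- `p = (a, b)` with `a + 1 < b < m` (and not the pair `(0, m-1)`) is a diagonal of the
convex `m`-gon with vertices `0, 1, …, m-1` in counterclockwise order. -/
def IsDiag (m : ℕ) (p : ℕ × ℕ) : Prop :=
  p.1 + 1 < p.2 ∧ p.2 < m ∧ ¬(p.1 = 0 ∧ p.2 = m - 1)

/-- Two diagonals of a convex polygon cross iff their endpoints interlace. -/
def Cross (p q : ℕ × ℕ) : Prop :=
  (p.1 < q.1 ∧ q.1 < p.2 ∧ p.2 < q.2) ∨ (q.1 < p.1 ∧ p.1 < q.2 ∧ q.2 < p.2)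

/-- An ideal triangulation of the convex `m`-gon: a maximal (equivalently, of cardinality
`m - 3`) collection of pairwise noncrossing diagonals. -/
def IsTriangulation (m : ℕ) (T : Finset (ℕ × ℕ)) : Prop :=
  (∀ p ∈ T, IsDiag m p) ∧ (∀ p ∈ T, ∀ q ∈ T, ¬Cross p q) ∧ T.card = m - 3

/-- Boundary sides of the convex `m`-gon. -/
def IsSide (m : ℕ) (p : ℕ × ℕ) : Prop :=
  (p.2 = p.1 + 1 ∧ p.2 < m) ∨ (p.1 = 0 ∧ p.2 = m - 1 ∧ 2 ≤ m)

/-- Edges of a triangulation `T`: its diagonals together with the boundary sides. -/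
def IsEdge (m : ℕ) (T : Finset (ℕ × ℕ)) (p : ℕ × ℕ) : Prop := p ∈ T ∨ IsSide m p

/-! ### Auxiliary definitions: polygons on an arbitrary finite vertex set `S ⊆ ℕ` -/

/-- Boundary sides of the polygon on vertex set `S` (consecutive pair, or the wrap pair
`(min S, max S)`). -/
def SSide (S : Finset ℕ) (p : ℕ × ℕ) : Prop :=
  p.1 ∈ S ∧ p.2 ∈ S ∧ p.1 < p.2 ∧
    ((∀ c ∈ S, ¬(p.1 < c ∧ c < p.2)) ∨ (∀ c ∈ S, p.1 ≤ c ∧ c ≤ p.2))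

/-- Diagonals of the polygon on vertex set `S`. -/
def SDiag (S : Finset ℕ) (p : ℕ × ℕ) : Prop :=
  p.1 ∈ S ∧ p.2 ∈ S ∧ (∃ c ∈ S, p.1 < c ∧ c < p.2) ∧ (∃ c ∈ S, c < p.1 ∨ p.2 < c)

/-- `n1 < n2` are the two cyclic neighbours of `k` in the polygon on `S`. -/
def NbrP (S : Finset ℕ) (k n1 n2 : ℕ) : Prop :=
  k ∈ S ∧ n1 ∈ S ∧ n2 ∈ S ∧ n1 < n2 ∧
    ((n1 < k ∧ k < n2 ∧ ∀ c ∈ S, n1 < c → c < n2 → c = k) ∨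
     ((k < n1 ∨ n2 < k) ∧ ∀ c ∈ S, c ≠ k → n1 ≤ c ∧ c ≤ n2))

lemma side_not_diag {S : Finset ℕ} {p : ℕ × ℕ} (h : SSide S p) : ¬ SDiag S p := by
  obtain ⟨h1, h2, h3, h4 | h4⟩ := h
  · rintro ⟨-, -, ⟨c, hc, hc1, hc2⟩, -⟩
    exact h4 c hc ⟨hc1, hc2⟩
  · rintro ⟨-, -, -, ⟨c, hc, hc1 | hc1⟩⟩
    · exact absurd (h4 c hc).1 (by omega)
    · exact absurd (h4 c hc).2 (by omega)

lemma removal {S : Finset ℕ} {k n1 n2 : ℕ} (h : NbrP S k n1 n2) (hcard : 4 ≤ S.card) :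
    SDiag S (n1, n2) ∧ SSide (S.erase k) (n1, n2) ∧
      (∀ d : ℕ × ℕ, SDiag (S.erase k) d → SDiag S d ∧ ¬Cross d (n1, n2) ∧ ¬Cross (n1, n2) d) ∧
      (∀ p : ℕ × ℕ, SSide (S.erase k) p → p = (n1, n2) ∨ SSide S p) := by
  obtain ⟨hk, hn1, hn2, hlt, hcase⟩ := h
  have h4th : ∃ c ∈ S, c ≠ n1 ∧ c ≠ k ∧ c ≠ n2 := by
    by_contra hcon
    push_neg at hcon
    have hsub : S ⊆ ({n1, k, n2} : Finset ℕ) := by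
      intro x hx
      simp only [Finset.mem_insert, Finset.mem_singleton]
      by_contra hx2
      push_neg at hx2
      exact hx2.2.2 (hcon x hx hx2.1 hx2.2.1)
    have h1 := Finset.card_le_card hsub
    have h2 : ({n1, k, n2} : Finset ℕ).card ≤ 3 := by
      apply le_trans (Finset.card_insert_le _ _)
      exact Nat.succ_le_succ (le_trans (Finset.card_insert_le _ _) (by simp))
    omega
  obtain ⟨w, hw, hwn1, hwk, hwn2⟩ := h4th
  have hkn1 : k ≠ n1 := by rcases hcase with ⟨a, b, -⟩ | ⟨a | a, -⟩ <;> omega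
  have hkn2 : k ≠ n2 := by rcases hcase with ⟨a, b, -⟩ | ⟨a | a, -⟩ <;> omega
  have hn1e : n1 ∈ S.erase k := Finset.mem_erase.mpr ⟨fun h => hkn1 h.symm, hn1⟩
  have hn2e : n2 ∈ S.erase k := Finset.mem_erase.mpr ⟨fun h => hkn2 h.symm, hn2⟩
  have hwe : w ∈ S.erase k := Finset.mem_erase.mpr ⟨hwk, hw⟩
  rcases hcase with ⟨hik1, hik2, huniq⟩ | ⟨hout, hbound⟩
  · -- interior case
    have hbet : ∀ x ∈ S.erase k, ¬(n1 < x ∧ x < n2) := by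
      intro x hx ⟨u, v⟩
      obtain ⟨hx1, hx2⟩ := Finset.mem_erase.mp hx
      exact hx1 (huniq x hx2 u v)
    have hwout : w < n1 ∨ n2 < w := by
      rcases Nat.lt_trichotomy w n1 with h | h | h
      · exact Or.inl h
      · omega
      · rcases Nat.lt_trichotomy w n2 with h' | h' | h'
        · exact absurd (huniq w hw h h') hwk
        · omega
        · exact Or.inr h'
    refine ⟨⟨hn1, hn2, ⟨k, hk, hik1, hik2⟩, ⟨w, hw, hwout⟩⟩,
      ⟨hn1e, hn2e, hlt, Or.inl (fun c hc hcc => hbet c hc hcc)⟩, ?_, ?_⟩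
    · rintro ⟨a, b⟩ ⟨ha, hb, ⟨c, hc, hc1, hc2⟩, ⟨c', hc', hc'1⟩⟩
      refine ⟨⟨Finset.mem_of_mem_erase ha, Finset.mem_of_mem_erase hb,
        ⟨c, Finset.mem_of_mem_erase hc, hc1, hc2⟩,
        ⟨c', Finset.mem_of_mem_erase hc', hc'1⟩⟩, ?_, ?_⟩
      · rintro (⟨x1, x2, x3⟩ | ⟨x1, x2, x3⟩)
        · exact hbet b hb ⟨x2, x3⟩
        · exact hbet a ha ⟨x1, x2⟩
      · rintro (⟨x1, x2, x3⟩ | ⟨x1, x2, x3⟩)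
        · exact hbet a ha ⟨x1, x2⟩
        · exact hbet b hb ⟨x2, x3⟩
    · rintro ⟨a, b⟩ ⟨ha, hb, hab, hside | hside⟩
      have ha' := Finset.mem_erase.mp ha
      have hb' := Finset.mem_erase.mp hb
      · by_cases hkbet : a < k ∧ k < b
        · left
          have hean : a = n1 := by
            rcases Nat.lt_trichotomy a n1 with h | h | h
            · exact absurd ⟨h, lt_trans hik1 hkbet.2⟩ (hside n1 hn1e)
            · exact h
            · exact absurd (huniq a ha'.2 h (lt_trans hkbet.1 hik2)) ha'.1
          have hebn : b = n2 := by
            rcases Nat.lt_trichotomy b n2 with h | h | h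
            · exact absurd (huniq b hb'.2 (lt_trans hik1 hkbet.2) h) hb'.1
            · exact h
            · exact absurd ⟨by omega, h⟩ (hside n2 hn2e)
          simp [hean, hebn]
        · right
          refine ⟨ha'.2, hb'.2, hab, Or.inl ?_⟩
          intro c hc hcc
          by_cases hck : c = k
          · exact hkbet (hck ▸ hcc)
          · exact hside c (Finset.mem_erase.mpr ⟨hck, hc⟩) hcc
      · -- wrap side in S.erase k
        right
        refine ⟨Finset.mem_of_mem_erase ha, Finset.mem_of_mem_erase hb, hab, Or.inr ?_⟩
        intro c hc
        by_cases hck : c = k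
        · have l1 := hside n1 hn1e
          have l2 := hside n2 hn2e
          omega
        · exact hside c (Finset.mem_erase.mpr ⟨hck, hc⟩)
  · -- wrap case (k is min or max)
    have hbnd' : ∀ x ∈ S.erase k, n1 ≤ x ∧ x ≤ n2 := by
      intro x hx
      obtain ⟨hx1, hx2⟩ := Finset.mem_erase.mp hx
      exact hbound x hx2 hx1
    refine ⟨⟨hn1, hn2, ⟨w, hw, ?_, ?_⟩, ⟨k, hk, hout⟩⟩,
      ⟨hn1e, hn2e, hlt, Or.inr hbnd'⟩, ?_, ?_⟩
    · have := hbound w hw hwk; omega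
    · have := hbound w hw hwk; omega
    · rintro ⟨a, b⟩ ⟨ha, hb, ⟨c, hc, hc1, hc2⟩, ⟨c', hc', hc'1⟩⟩
      have hba := hbnd' a ha
      have hbb := hbnd' b hb
      refine ⟨⟨Finset.mem_of_mem_erase ha, Finset.mem_of_mem_erase hb,
        ⟨c, Finset.mem_of_mem_erase hc, hc1, hc2⟩,
        ⟨c', Finset.mem_of_mem_erase hc', hc'1⟩⟩, ?_, ?_⟩
      · rintro (⟨x1, x2, x3⟩ | ⟨x1, x2, x3⟩) <;> omega
      · rintro (⟨x1, x2, x3⟩ | ⟨x1, x2, x3⟩) <;> omega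
    · rintro ⟨a, b⟩ ⟨ha, hb, hab, hside | hside⟩
      · right
        have hba := hbnd' a ha
        have hbb := hbnd' b hb
        refine ⟨Finset.mem_of_mem_erase ha, Finset.mem_of_mem_erase hb, hab, Or.inl ?_⟩
        intro c hc hcc
        by_cases hck : c = k
        · omega
        · exact hside c (Finset.mem_erase.mpr ⟨hck, hc⟩) hcc
      · left
        have l1 := hside n1 hn1e
        have l2 := hside n2 hn2e
        have hba := hbnd' a ha
        have hbb := hbnd' b hb
        have : a = n1 := by omega
        have : b = n2 := by omega
        simp_all

/-! ### Cyclic combinatorics on `Fin m` -/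

section FinLemmas
open scoped Fin.NatCast Fin.CommRing
variable {m : ℕ} [NeZero m] {α : Type*}

lemma fin_val_num (hm : 3 ≤ m) : ((2 : Fin m)).val = 2 := by
  have h : ((2 : Fin m)).val = 2 % m := rfl
  rw [h, Nat.mod_eq_of_lt (by omega)]

lemma fin_two_ne_zero (hm : 3 ≤ m) : (2 : Fin m) ≠ 0 := by
  intro h
  have := congrArg Fin.val h
  rw [fin_val_num hm, Fin.val_zero] at this
  omega

lemma fin_add_two_ne (hm : 3 ≤ m) (x : Fin m) : x + 2 ≠ x := by
  intro h
  have : x + 2 = x + 0 := by rw [h, add_zero]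
  exact fin_two_ne_zero hm (add_left_cancel this)

lemma fin_val_add_one' (hm : 2 ≤ m) (i : Fin m) : ((i + 1 : Fin m)).val = (i.val + 1) % m := by
  rw [Fin.add_def, Fin.val_one']
  simp only [Fin.val_mk]
  rw [Nat.mod_eq_of_lt (show 1 < m by omega)]

lemma fin_val_sub_one' (hm : 2 ≤ m) (i : Fin m) : ((i - 1 : Fin m)).val = (i.val + (m - 1)) % m := by
  rw [Fin.sub_def, Fin.val_one']
  simp only [Fin.val_mk]
  rw [Nat.mod_eq_of_lt (show 1 < m by omega), Nat.add_comm]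

lemma fin_val_add_one_lt (hm : 2 ≤ m) (i : Fin m) (h : i.val + 1 < m) :
    ((i + 1 : Fin m)).val = i.val + 1 := by
  rw [fin_val_add_one' hm, Nat.mod_eq_of_lt h]

lemma fin_add_one_last (hm : 2 ≤ m) (i : Fin m) (h : i.val + 1 = m) : (i + 1 : Fin m) = 0 := by
  apply Fin.ext
  rw [fin_val_add_one' hm, h, Nat.mod_self, Fin.val_zero]

lemma fin_val_sub_one_pos (hm : 2 ≤ m) (i : Fin m) (h : 0 < i.val) :
    ((i - 1 : Fin m)).val = i.val - 1 := by
  rw [fin_val_sub_one' hm, show i.val + (m - 1) = (i.val - 1) + m by omega,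
    Nat.add_mod_right, Nat.mod_eq_of_lt (by have := i.isLt; omega)]

lemma fin_val_sub_one_zero (hm : 2 ≤ m) (i : Fin m) (h : i.val = 0) :
    ((i - 1 : Fin m)).val = m - 1 := by
  rw [fin_val_sub_one' hm, h, Nat.zero_add, Nat.mod_eq_of_lt (by omega)]

lemma prop2 (hm : 3 ≤ m) (f : Fin m → α)
    (H : ∀ i : Fin m, (∃ j, j ≠ i ∧ f j = f i) → f (i - 1) = f (i + 1))
    (i0 : Fin m) (hrep : ∃ j, j ≠ i0 ∧ f j = f i0) :
    ∀ j : Fin m, f j = f i0 ∨ f j = f (i0 + 1) := by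
  have hC : ∀ s : ℕ, f (i0 + (s : Fin m) + 2) = f (i0 + (s : Fin m)) := by
    intro s
    induction s with
    | zero =>
      have e1 := H i0 hrep
      have hne : i0 - 1 ≠ i0 + 1 := by
        intro h
        have h2 : (i0 - 1) + 2 = i0 - 1 := by
          rw [show (i0 - 1) + 2 = i0 + 1 from by ring, ← h]
        exact fin_add_two_ne hm _ h2
      have e2 := H (i0 + 1) ⟨i0 - 1, hne, e1⟩
      have h1 : i0 + 1 - 1 = i0 := by ring
      have h4 : i0 + 1 + 1 = i0 + 2 := by ring
      rw [h1, h4] at e2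
      simp only [Nat.cast_zero, add_zero]
      exact e2.symm
    | succ s ih =>
      have hne : i0 + (s : Fin m) ≠ i0 + (s : Fin m) + 2 := fun h => fin_add_two_ne hm _ h.symm
      have e2 := H (i0 + (s : Fin m) + 2) ⟨i0 + (s : Fin m), hne, ih.symm⟩
      have c1 : ((s + 1 : ℕ) : Fin m) = (s : Fin m) + 1 := by push_cast; ring
      rw [c1]
      have h1 : i0 + (s : Fin m) + 2 - 1 = i0 + (s : Fin m) + 1 := by ring
      have h2 : i0 + (s : Fin m) + 2 + 1 = i0 + ((s : Fin m) + 1) + 2 := by ring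
      have h3 : i0 + (s : Fin m) + 1 = i0 + ((s : Fin m) + 1) := by ring
      rw [h1, h2, h3] at e2
      exact e2.symm
  have hD : ∀ s : ℕ, f (i0 + (s : Fin m)) = f i0 ∨ f (i0 + (s : Fin m)) = f (i0 + 1) := by
    intro s
    induction s using Nat.strong_induction_on with
    | _ s ih =>
      match s with
      | 0 => left; simp
      | 1 => right; simp
      | (s + 2) =>
        have c1 : ((s + 2 : ℕ) : Fin m) = (s : Fin m) + 2 := by push_cast; ring
        have := hC s
        rw [c1, ← add_assoc, this]
        exact ih s (by omega)
  intro j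
  have : j = i0 + (((j - i0 : Fin m)).val : Fin m) := by
    rw [Fin.cast_val_eq_self]; ring
  rw [this]
  exact hD _

lemma key (hm : 4 ≤ m) (f : Fin m → α)
    (h3 : ∃ a b c : Fin m, f a ≠ f b ∧ f b ≠ f c ∧ f a ≠ f c) :
    ∃ i : Fin m, f (i - 1) ≠ f (i + 1) ∧
      ∃ a b c : Fin m, a ≠ i ∧ b ≠ i ∧ c ≠ i ∧ f a ≠ f b ∧ f b ≠ f c ∧ f a ≠ f c := by
  classical
  have hm3 : 3 ≤ m := by omega
  have hsub1 : ∀ i : Fin m, i - 1 ≠ i + 1 := by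
    intro i h
    have h2 : (i - 1) + 2 = i - 1 := by
      rw [show (i - 1) + 2 = i + 1 from by ring, ← h]
    exact fin_add_two_ne hm3 _ h2
  by_cases hcase : ∃ i : Fin m, (∃ j, j ≠ i ∧ f j = f i) ∧ f (i - 1) ≠ f (i + 1)
  · obtain ⟨i, ⟨j, hj, hfj⟩, hne⟩ := hcase
    obtain ⟨a, b, c, hab, hbc, hac⟩ := h3
    have repl : ∀ x : Fin m, ∃ x' : Fin m, x' ≠ i ∧ f x' = f x := by
      intro x
      by_cases hx : x = i
      · exact ⟨j, hj, by rw [hfj, hx]⟩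
      · exact ⟨x, hx, rfl⟩
    obtain ⟨a', ha', hfa⟩ := repl a
    obtain ⟨b', hb', hfb⟩ := repl b
    obtain ⟨c', hc', hfc⟩ := repl c
    exact ⟨i, hne, a', b', c', ha', hb', hc',
      by rw [hfa, hfb]; exact hab, by rw [hfb, hfc]; exact hbc, by rw [hfa, hfc]; exact hac⟩
  · push_neg at hcase
    by_cases hrep : ∃ i : Fin m, ∃ j, j ≠ i ∧ f j = f i
    · obtain ⟨i0, hrep0⟩ := hrep
      have hall := prop2 hm3 f hcase i0 hrep0
      obtain ⟨a, b, c, hab, hbc, hac⟩ := h3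
      exfalso
      rcases hall a with ha | ha <;> rcases hall b with hb | hb <;> rcases hall c with hc | hc <;>
        rw [ha, hb] at hab <;> rw [hb, hc] at hbc <;> rw [ha, hc] at hac <;> simp_all
    · push_neg at hrep
      have hne : ∀ a b : ℕ, a < m → b < m → a ≠ b → ((a : Fin m)) ≠ ((b : Fin m)) := by
        intro a b ha hb hab h
        have := congrArg Fin.val h
        rw [Fin.val_cast_of_lt ha, Fin.val_cast_of_lt hb] at this
        exact hab this
      have h0 : (0 : Fin m) = ((0 : ℕ) : Fin m) := by simp
      refine ⟨0, hrep _ _ (hsub1 0), ((1:ℕ) : Fin m), ((2:ℕ) : Fin m), ((3:ℕ) : Fin m),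
        ?_, ?_, ?_, hrep _ _ ?_, hrep _ _ ?_, hrep _ _ ?_⟩ <;>
        (try rw [h0]) <;> exact hne _ _ (by omega) (by omega) (by omega)

end FinLemmas

lemma exists_k (ψ : ℕ → OnePoint ℂ) (S : Finset ℕ) (hcard : 4 ≤ S.card)
    (hside : ∀ p : ℕ × ℕ, SSide S p → ψ p.1 ≠ ψ p.2)
    (hval : ∃ a ∈ S, ∃ b ∈ S, ∃ c ∈ S, ψ a ≠ ψ b ∧ ψ b ≠ ψ c ∧ ψ a ≠ ψ c) :
    ∃ k n1 n2, NbrP S k n1 n2 ∧ ψ n1 ≠ ψ n2 ∧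
      (∃ a ∈ S.erase k, ∃ b ∈ S.erase k, ∃ c ∈ S.erase k,
        ψ a ≠ ψ b ∧ ψ b ≠ ψ c ∧ ψ a ≠ ψ c) := by
  obtain ⟨m, hm⟩ : ∃ m, S.card = m := ⟨_, rfl⟩
  rw [hm] at hcard
  haveI : NeZero m := ⟨by omega⟩
  have hm2 : 2 ≤ m := by omega
  set e := S.orderIsoOfFin hm with he
  set u : Fin m → ℕ := fun i => (e i : ℕ) with hu
  have hmono : StrictMono u := fun a b hab => by
    simpa [hu] using (e.strictMono hab)
  have humem : ∀ i, u i ∈ S := fun i => (e i).2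
  have husurj : ∀ c ∈ S, ∃ i, u i = c := by
    intro c hc
    exact ⟨e.symm ⟨c, hc⟩, by simp [hu]⟩
  set f : Fin m → OnePoint ℂ := fun i => ψ (u i) with hf
  -- at least three values for f
  have h3 : ∃ a b c : Fin m, f a ≠ f b ∧ f b ≠ f c ∧ f a ≠ f c := by
    obtain ⟨a, ha, b, hb, c, hc, h1, h2, h3⟩ := hval
    obtain ⟨ia, rfl⟩ := husurj a ha
    obtain ⟨ib, rfl⟩ := husurj b hb
    obtain ⟨ic, rfl⟩ := husurj c hc
    exact ⟨ia, ib, ic, h1, h2, h3⟩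
  obtain ⟨i, hne, a, b, c, hai, hbi, hci, hab, hbc, hac⟩ := key (by omega) f h3
  refine ?_
  -- the chosen vertex and its neighbours
  have humemE : ∀ (j : Fin m), j ≠ i → u j ∈ S.erase (u i) := fun j hj =>
    Finset.mem_erase.mpr ⟨fun h => hj (hmono.injective h), humem j⟩
  have hval' : ∃ a' ∈ S.erase (u i), ∃ b' ∈ S.erase (u i), ∃ c' ∈ S.erase (u i),
      ψ a' ≠ ψ b' ∧ ψ b' ≠ ψ c' ∧ ψ a' ≠ ψ c' :=
    ⟨u a, humemE a hai, u b, humemE b hbi, u c, humemE c hci, hab, hbc, hac⟩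
  rcases Nat.lt_trichotomy 0 i.val with hpos | hzero | h0
  · by_cases hlast : i.val + 1 < m
    · -- interior
      have hv1 : ((i - 1 : Fin m)).val = i.val - 1 := fin_val_sub_one_pos hm2 i hpos
      have hv2 : ((i + 1 : Fin m)).val = i.val + 1 := fin_val_add_one_lt hm2 i hlast
      refine ⟨u i, u (i - 1), u (i + 1), ⟨humem i, humem _, humem _, ?_, Or.inl ⟨?_, ?_, ?_⟩⟩,
        hne, hval'⟩
      · exact hmono (by rw [Fin.lt_def, hv1, hv2]; omega)
      · exact hmono (by rw [Fin.lt_def, hv1]; omega)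
      · exact hmono (by rw [Fin.lt_def, hv2]; omega)
      · intro x hx hx1 hx2
        obtain ⟨j, rfl⟩ := husurj x hx
        have l1 : (i - 1 : Fin m) < j := hmono.lt_iff_lt.mp hx1
        have l2 : j < (i + 1 : Fin m) := hmono.lt_iff_lt.mp hx2
        rw [Fin.lt_def, hv1] at l1
        rw [Fin.lt_def, hv2] at l2
        congr 1
        exact Fin.ext (by omega)
    · -- i is the last index : k = max
      have hvm : i.val + 1 = m := by have := i.isLt; omega
      have hv1 : ((i - 1 : Fin m)).val = i.val - 1 := fin_val_sub_one_pos hm2 i hpos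
      have hv2 : (i + 1 : Fin m) = 0 := fin_add_one_last hm2 i hvm
      refine ⟨u i, u (i + 1), u (i - 1), ⟨humem i, humem _, humem _, ?_,
        Or.inr ⟨Or.inr ?_, ?_⟩⟩, fun hcc => hne hcc.symm, hval'⟩
      · exact hmono (by rw [Fin.lt_def, hv1, hv2, Fin.val_zero]; omega)
      · exact hmono (by rw [Fin.lt_def, hv1]; omega)
      · intro x hx hxk
        obtain ⟨j, rfl⟩ := husurj x hx
        have hji : j ≠ i := fun h => hxk (by rw [h])
        have hjv : j.val ≤ i.val - 1 := by
          have := j.isLt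
          have : j.val ≠ i.val := fun h => hji (Fin.ext h)
          omega
        constructor
        · exact hmono.monotone (by rw [Fin.le_def, hv2, Fin.val_zero]; omega)
        · exact hmono.monotone (by rw [Fin.le_def, hv1]; omega)
  · -- i = 0 : k = min
    have hv1 : ((i + 1 : Fin m)).val = i.val + 1 := fin_val_add_one_lt hm2 i (by omega)
    have hv2 : ((i - 1 : Fin m)).val = m - 1 := fin_val_sub_one_zero hm2 i hzero.symm
    refine ⟨u i, u (i + 1), u (i - 1), ⟨humem i, humem _, humem _, ?_,
      Or.inr ⟨Or.inl ?_, ?_⟩⟩, fun hcc => hne hcc.symm, hval'⟩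
    · exact hmono (by rw [Fin.lt_def, hv1, hv2]; omega)
    · exact hmono (by rw [Fin.lt_def, hv1]; omega)
    · intro x hx hxk
      obtain ⟨j, rfl⟩ := husurj x hx
      have hji : j ≠ i := fun h => hxk (by rw [h])
      have hjv : 1 ≤ j.val := by
        have : j.val ≠ i.val := fun h => hji (Fin.ext h)
        omega
      constructor
      · exact hmono.monotone (by rw [Fin.le_def, hv1]; omega)
      · exact hmono.monotone (by rw [Fin.le_def, hv2]; have := j.isLt; omega)
  · omega

lemma main (ψ : ℕ → OnePoint ℂ) :
    ∀ n : ℕ, ∀ S : Finset ℕ, S.card = n + 3 →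
    (∀ p : ℕ × ℕ, SSide S p → ψ p.1 ≠ ψ p.2) →
    (∃ a ∈ S, ∃ b ∈ S, ∃ c ∈ S, ψ a ≠ ψ b ∧ ψ b ≠ ψ c ∧ ψ a ≠ ψ c) →
    ∃ T : Finset (ℕ × ℕ), (∀ p ∈ T, SDiag S p) ∧ (∀ p ∈ T, ∀ q ∈ T, ¬Cross p q) ∧
      T.card = n ∧ ∀ p ∈ T, ψ p.1 ≠ ψ p.2 := by
  intro n
  induction n with
  | zero =>
    intro S hS hside hval
    exact ⟨∅, by simp, by simp, by simp, by simp⟩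
  | succ n ih =>
    intro S hS hside hval
    obtain ⟨k, n1, n2, hnbr, hpsi, hval'⟩ := exists_k ψ S (by omega) hside hval
    have hker : k ∈ S := hnbr.1
    obtain ⟨hdiag_e, hside_e, hdiags, hsides⟩ := removal hnbr (by omega)
    have hcard' : (S.erase k).card = n + 3 := by
      rw [Finset.card_erase_of_mem hker]; omega
    have hside' : ∀ p : ℕ × ℕ, SSide (S.erase k) p → ψ p.1 ≠ ψ p.2 := by
      intro p hp
      rcases hsides p hp with rfl | hp'
      · exact hpsi
      · exact hside p hp'
    obtain ⟨T', hT1, hT2, hT3, hT4⟩ := ih (S.erase k) hcard' hside' hval'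
    have henotin : (n1, n2) ∉ T' := fun h => side_not_diag hside_e (hT1 _ h)
    refine ⟨insert (n1, n2) T', ?_, ?_, ?_, ?_⟩
    · intro p hp
      rcases Finset.mem_insert.mp hp with rfl | hp'
      · exact hdiag_e
      · exact (hdiags p (hT1 p hp')).1
    · intro p hp q hq
      rcases Finset.mem_insert.mp hp with rfl | hp'
      · rcases Finset.mem_insert.mp hq with rfl | hq'
        · rintro (⟨x1, -, -⟩ | ⟨x1, -, -⟩) <;> exact lt_irrefl _ x1
        · exact (hdiags q (hT1 q hq')).2.2
      · rcases Finset.mem_insert.mp hq with rfl | hq'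
        · exact (hdiags p (hT1 p hp')).2.1
        · exact hT2 p hp' q hq'
    · rw [Finset.card_insert_of_notMem henotin, hT3]
    · intro p hp
      rcases Finset.mem_insert.mp hp with rfl | hp'
      · exact hpsi
      · exact hT4 p hp'

lemma sside_range {m : ℕ} (hm : 3 ≤ m) {p : ℕ × ℕ} (h : SSide (Finset.range m) p) :
    IsSide m p := by
  obtain ⟨h1, h2, h3, h4 | h4⟩ := h
  · rw [Finset.mem_range] at h1 h2
    left
    refine ⟨?_, h2⟩
    by_contra hc
    exact h4 (p.1 + 1) (Finset.mem_range.mpr (by omega)) ⟨by omega, by omega⟩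
  · rw [Finset.mem_range] at h1 h2
    right
    have l1 := h4 0 (Finset.mem_range.mpr (by omega))
    have l2 := h4 (m - 1) (Finset.mem_range.mpr (by omega))
    exact ⟨by omega, by omega, by omega⟩

lemma sdiag_range {m : ℕ} {p : ℕ × ℕ} (h : SDiag (Finset.range m) p) : IsDiag m p := by
  obtain ⟨h1, h2, ⟨c, hc, hc1, hc2⟩, ⟨c', hc', hc'1⟩⟩ := h
  rw [Finset.mem_range] at h1 h2 hc hc'
  refine ⟨by omega, h2, ?_⟩
  rintro ⟨e1, e2⟩
  omega

/-- If `ψ` assigns distinct points of `ℂP¹` to the endpoints of every boundary side, and its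
image contains at least three distinct points, then there is an ideal triangulation `T` of
the `(n+3)`-gon such that `ψ` assigns distinct points to the endpoints of every edge of `T`. -/
theorem stmt_7 (n : ℕ) (ψ : ℕ → OnePoint ℂ)
    (h1 : ∀ p : ℕ × ℕ, IsSide (n + 3) p → ψ p.1 ≠ ψ p.2)
    (h2 : ∃ i j k, i < n + 3 ∧ j < n + 3 ∧ k < n + 3 ∧
      ψ i ≠ ψ j ∧ ψ j ≠ ψ k ∧ ψ i ≠ ψ k) :
    ∃ T : Finset (ℕ × ℕ), IsTriangulation (n + 3) T ∧
      ∀ p : ℕ × ℕ, IsEdge (n + 3) T p → ψ p.1 ≠ ψ p.2 := by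
  have hcard : (Finset.range (n + 3)).card = n + 3 := Finset.card_range _
  have hside : ∀ p : ℕ × ℕ, SSide (Finset.range (n + 3)) p → ψ p.1 ≠ ψ p.2 :=
    fun p hp => h1 p (sside_range (by omega) hp)
  have hval : ∃ a ∈ Finset.range (n + 3), ∃ b ∈ Finset.range (n + 3),
      ∃ c ∈ Finset.range (n + 3), ψ a ≠ ψ b ∧ ψ b ≠ ψ c ∧ ψ a ≠ ψ c := by
    obtain ⟨i, j, k, hi, hj, hk, e1, e2, e3⟩ := h2
    exact ⟨i, Finset.mem_range.mpr hi, j, Finset.mem_range.mpr hj,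
      k, Finset.mem_range.mpr hk, e1, e2, e3⟩
  obtain ⟨T, hT1, hT2, hT3, hT4⟩ := main ψ n (Finset.range (n + 3)) hcard hside hval
  refine ⟨T, ⟨fun p hp => sdiag_range (hT1 p hp), hT2, by omega⟩, ?_⟩
  rintro p (hp | hp)
  · exact hT4 p hp
  · exact h1 p hp
end

section
/- Given an ideal triangulation T of the (n+3)-gon and any assignment of a nonzero complex number X_j to each diagonal j of T, there exists a map ψ from the vertices of the polygon to ℂP¹, generic with respect to T and unique up to the diagonal action of PGL₂(ℂ), such that for every diagonal j the cross-ratio of the four vertices of the quadrilateral formed by the two triangles adjacent to j equals X_j. Consequently, cross-ratios give a bijection between PGL₂(ℂ)-orbits of T-generic configurations and (ℂ*)ⁿ. -/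
/-- A triangle of the triangulation `T`: three vertices pairwise joined by edges of `T`. -/
def IsTri (m : ℕ) (T : Finset (ℕ × ℕ)) (a b c : ℕ) : Prop :=
  a < b ∧ b < c ∧ IsEdge m T (a, b) ∧ IsEdge m T (b, c) ∧ IsEdge m T (a, c)

/-- `Quad m T p b d` : the diagonal `p = (p.1, p.2)` of `T` separates the two triangles
`p.1 b p.2` and (`d p.1 p.2` or `p.1 p.2 d`) of `T`; the vertices `p.1, b, p.2, d` of the
resulting quadrilateral are in counterclockwise order. -/
def Quad (m : ℕ) (T : Finset (ℕ × ℕ)) (p : ℕ × ℕ) (b d : ℕ) : Prop :=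
  IsTri m T p.1 b p.2 ∧
    ((d < p.1 ∧ IsTri m T d p.1 p.2) ∨ (p.2 < d ∧ IsTri m T p.1 p.2 d))

/-- The cross-ratio of four points. -/
noncomputable def crossRatio (z₁ z₂ z₃ z₄ : ℂ) : ℂ :=
  (z₁ - z₂) * (z₃ - z₄) / ((z₂ - z₃) * (z₁ - z₄))


set_option maxHeartbeats 1000000

lemma cr_solve {x y z X : ℂ} (hxy : x ≠ y) (hyz : y ≠ z) (hxz : x ≠ z) (hX : X ≠ 0)
    (hB : (y - z) + X * (x - z) ≠ 0) :
    ∃ v : ℂ, crossRatio x v y z = X ∧ v ≠ x ∧ v ≠ y := by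
  have hvy : (x * (y - z) + X * y * (x - z)) / ((y - z) + X * (x - z)) - y
      = (x - y) * (y - z) / ((y - z) + X * (x - z)) := by
    field_simp; ring
  have hxv : x - (x * (y - z) + X * y * (x - z)) / ((y - z) + X * (x - z))
      = X * (x - y) * (x - z) / ((y - z) + X * (x - z)) := by
    field_simp; ring
  have hvy0 : (x - y) * (y - z) / ((y - z) + X * (x - z)) ≠ 0 :=
    div_ne_zero (mul_ne_zero (sub_ne_zero.mpr hxy) (sub_ne_zero.mpr hyz)) hB
  have hxv0 : X * (x - y) * (x - z) / ((y - z) + X * (x - z)) ≠ 0 :=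
    div_ne_zero (mul_ne_zero (mul_ne_zero hX (sub_ne_zero.mpr hxy)) (sub_ne_zero.mpr hxz)) hB
  refine ⟨(x * (y - z) + X * y * (x - z)) / ((y - z) + X * (x - z)), ?_, ?_, ?_⟩
  · rw [crossRatio, hxv, hvy, div_eq_iff]
    · field_simp
    · exact mul_ne_zero (by rw [← hvy] at hvy0 ⊢; exact hvy0) (sub_ne_zero.mpr hxz)
  · intro h
    rw [h, sub_self] at hxv
    exact hxv0 hxv.symm
  · intro h
    rw [h, sub_self] at hvy
    exact hvy0 hvy.symm
lemma cr_eq {x u y z X : ℂ} (hX : X ≠ 0) (h : crossRatio x u y z = X) :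
    u ≠ y ∧ x ≠ z ∧ (x - u) * (y - z) = X * ((u - y) * (x - z)) := by
  have hd : (u - y) * (x - z) ≠ 0 := by
    intro h0
    rw [crossRatio, h0, div_zero] at h
    exact hX h.symm
  have h1 : u - y ≠ 0 := fun h0 => hd (by rw [h0, zero_mul])
  have h2 : x - z ≠ 0 := fun h0 => hd (by rw [h0, mul_zero])
  refine ⟨sub_ne_zero.mp h1, sub_ne_zero.mp h2, ?_⟩
  rw [crossRatio, div_eq_iff hd] at h
  exact h

lemma cr_inj {x y z X t t' : ℂ} (hX : X ≠ 0) (hxy : x ≠ y) (hyz : y ≠ z)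
    (h1 : crossRatio x t y z = X) (h2 : crossRatio x t' y z = X) : t = t' := by
  obtain ⟨-, -, e1⟩ := cr_eq hX h1
  obtain ⟨-, -, e2⟩ := cr_eq hX h2
  have key : (y - z) * (x - y) * (t' - t) = 0 := by
    linear_combination (t' - y) * e1 - (t - y) * e2
  rcases mul_eq_zero.mp key with h | h
  · rcases mul_eq_zero.mp h with h | h
    · exact absurd (sub_eq_zero.mp h) hyz
    · exact absurd (sub_eq_zero.mp h) hxy
  · exact (sub_eq_zero.mp h).symm

lemma moeb_sub (a b c d s t : ℂ) (hs : c * s + d ≠ 0) (ht : c * t + d ≠ 0) :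
    (a * s + b) / (c * s + d) - (a * t + b) / (c * t + d)
      = (a * d - b * c) * (s - t) / ((c * s + d) * (c * t + d)) := by
  rw [div_sub_div _ _ hs ht]; ring

lemma moeb_inj {a b c d s t : ℂ} (hdet : a * d - b * c ≠ 0) (hs : c * s + d ≠ 0)
    (ht : c * t + d ≠ 0) (hst : s ≠ t) :
    (a * s + b) / (c * s + d) ≠ (a * t + b) / (c * t + d) := by
  intro h
  have h0 : (a * s + b) / (c * s + d) - (a * t + b) / (c * t + d) = 0 := by rw [h]; ring
  rw [moeb_sub a b c d s t hs ht] at h0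
  exact (div_ne_zero (mul_ne_zero hdet (sub_ne_zero.mpr hst)) (mul_ne_zero hs ht)) h0

lemma moeb_cr {a b c d x u y z : ℂ} (hdet : a * d - b * c ≠ 0)
    (hx : c * x + d ≠ 0) (hu : c * u + d ≠ 0) (hy : c * y + d ≠ 0) (hz : c * z + d ≠ 0)
    (huy : u ≠ y) (hxz : x ≠ z) :
    crossRatio ((a * x + b) / (c * x + d)) ((a * u + b) / (c * u + d))
      ((a * y + b) / (c * y + d)) ((a * z + b) / (c * z + d)) = crossRatio x u y z := by
  have huy' : u - y ≠ 0 := sub_ne_zero.mpr huy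
  have hxz' : x - z ≠ 0 := sub_ne_zero.mpr hxz
  rw [crossRatio, crossRatio, moeb_sub a b c d x u hx hu, moeb_sub a b c d y z hy hz,
    moeb_sub a b c d u y hu hy, moeb_sub a b c d x z hx hz]
  field_simp

/-- Main step in the uniqueness argument. -/
lemma moeb_step {a b c d x y z u u' X : ℂ} (hdet : a * d - b * c ≠ 0)
    (hx : c * x + d ≠ 0) (hy : c * y + d ≠ 0) (hz : c * z + d ≠ 0)
    (hX : X ≠ 0) (hxy : x ≠ y) (hyz : y ≠ z) (hxz : x ≠ z)
    (hu : crossRatio x u y z = X)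
    (hu' : crossRatio ((a * x + b) / (c * x + d)) u'
      ((a * y + b) / (c * y + d)) ((a * z + b) / (c * z + d)) = X) :
    c * u + d ≠ 0 ∧ u' = (a * u + b) / (c * u + d) := by
  obtain ⟨x', hx'⟩ : ∃ t, t = (a * x + b) / (c * x + d) := ⟨_, rfl⟩
  obtain ⟨y', hy'⟩ : ∃ t, t = (a * y + b) / (c * y + d) := ⟨_, rfl⟩
  obtain ⟨z', hz'⟩ : ∃ t, t = (a * z + b) / (c * z + d) := ⟨_, rfl⟩
  rw [← hx', ← hy', ← hz'] at hu'
  have hxy' : x' ≠ y' := by rw [hx', hy']; exact moeb_inj hdet hx hy hxy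
  have hyz' : y' ≠ z' := by rw [hy', hz']; exact moeb_inj hdet hy hz hyz
  have hxz' : x' ≠ z' := by rw [hx', hz']; exact moeb_inj hdet hx hz hxz
  obtain ⟨huy, -, e⟩ := cr_eq hX hu
  obtain ⟨huy'', -, e'⟩ := cr_eq hX hu'
  -- the "bracket" of the primed equation is nonzero
  have hB' : (y' - z') + X * (x' - z') ≠ 0 := by
    intro hB
    have key : (y' - z') * (x' - y') = 0 := by
      linear_combination e' + (u' - y') * hB
    rcases mul_eq_zero.mp key with h | h
    · exact hyz' (sub_eq_zero.mp h)
    · exact hxy' (sub_eq_zero.mp h)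
  -- the bracket is proportional to an expression in the unprimed data
  have hBrel : ((y' - z') + X * (x' - z')) * ((c * x + d) * ((c * y + d) * (c * z + d)))
      = (a * d - b * c) * ((y - z) * (c * x + d) + X * ((x - z) * (c * y + d))) := by
    rw [hx', hy', hz']
    linear_combination (a * y + b) * (c * x + d) * (c * z + d) * (inv_mul_cancel₀ hy)
      - (a * z + b) * (c * x + d) * (c * y + d) * (inv_mul_cancel₀ hz)
      + X * (a * x + b) * (c * y + d) * (c * z + d) * (inv_mul_cancel₀ hx)
      - X * (a * z + b) * (c * x + d) * (c * y + d) * (inv_mul_cancel₀ hz)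
  -- pole avoidance
  have hcu : c * u + d ≠ 0 := by
    intro hp
    have hcx : c * x + d = c * (x - u) := by linear_combination hp
    have hcy : c * y + d = c * (y - u) := by linear_combination hp
    have inner : (y - z) * (c * x + d) + X * ((x - z) * (c * y + d)) = 0 := by
      rw [hcx, hcy]
      linear_combination c * e
    rw [inner, mul_zero] at hBrel
    have := mul_eq_zero.mp hBrel
    rcases this with h | h
    · exact hB' h
    · rcases mul_eq_zero.mp h with h | h
      · exact hx h
      · rcases mul_eq_zero.mp h with h | h
        · exact hy h
        · exact hz h
  -- conclude via invariance and injectivity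
  have hinv := moeb_cr hdet hx hcu hy hz huy hxz
  rw [hu, ← hx', ← hy', ← hz'] at hinv
  exact ⟨hcu, cr_inj hX hxy' hyz' hu' hinv⟩
lemma inv_sub {w s t : ℂ} (hs : s ≠ w) (ht : t ≠ w) :
    (s - w)⁻¹ - (t - w)⁻¹ = (t - s) / ((s - w) * (t - w)) := by
  have h1 : s - w ≠ 0 := sub_ne_zero.mpr hs
  have h2 : t - w ≠ 0 := sub_ne_zero.mpr ht
  field_simp
  ring

lemma div4 (A B C D : ℂ) (hB : B ≠ 0) (hC : C ≠ 0) (hD : D ≠ 0) :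
    (A / B) / (C / D) = A * D / (B * C) := by
  field_simp

lemma inv_cr {w x u y z : ℂ} (hx : x ≠ w) (hu : u ≠ w) (hy : y ≠ w) (hz : z ≠ w) :
    crossRatio (x - w)⁻¹ (u - w)⁻¹ (y - w)⁻¹ (z - w)⁻¹ = crossRatio x u y z := by
  rcases eq_or_ne u y with h | huy
  · subst h
    simp [crossRatio]
  rcases eq_or_ne x z with h | hxz
  · subst h
    simp [crossRatio]
  have h1 : x - w ≠ 0 := sub_ne_zero.mpr hx
  have h2 : u - w ≠ 0 := sub_ne_zero.mpr hu
  have h3 : y - w ≠ 0 := sub_ne_zero.mpr hy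
  have h4 : z - w ≠ 0 := sub_ne_zero.mpr hz
  have h5 : u - y ≠ 0 := sub_ne_zero.mpr huy
  have h6 : x - z ≠ 0 := sub_ne_zero.mpr hxz
  rw [crossRatio, crossRatio, inv_sub hx hu, inv_sub hy hz, inv_sub hu hy, inv_sub hx hz,
    div_mul_div_comm, div_mul_div_comm,
    div4 ((u - x) * (z - y)) ((x - w) * (u - w) * ((y - w) * (z - w)))
      ((y - u) * (z - x)) ((u - w) * (y - w) * ((x - w) * (z - w)))
      (mul_ne_zero (mul_ne_zero h1 h2) (mul_ne_zero h3 h4))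
      (mul_ne_zero (fun hh => h5 (by linear_combination -hh))
        (fun hh => h6 (by linear_combination -hh)))
      (mul_ne_zero (mul_ne_zero h2 h3) (mul_ne_zero h1 h4))]
  rw [div_eq_div_iff (mul_ne_zero (mul_ne_zero (mul_ne_zero h1 h2) (mul_ne_zero h3 h4))
      (mul_ne_zero (fun hh => h5 (by linear_combination -hh))
        (fun hh => h6 (by linear_combination -hh)))) (mul_ne_zero h5 h6)]
  ring

lemma badw (x0 y0 z0 X : ℂ) (S : Finset ℂ) (hxy : x0 ≠ y0) (hyz : y0 ≠ z0) (hxz : x0 ≠ z0)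
    (hX : X ≠ 0) :
    ∃ w, w ∉ S ∧ x0 ≠ w ∧ y0 ≠ w ∧ z0 ≠ w ∧
      ((y0 - w)⁻¹ - (z0 - w)⁻¹) + X * ((x0 - w)⁻¹ - (z0 - w)⁻¹) ≠ 0 := by
  have main : ∃ w, w ∉ S ∧ x0 ≠ w ∧ y0 ≠ w ∧ z0 ≠ w ∧
      (z0 - y0) * (x0 - w) + X * ((z0 - x0) * (y0 - w)) ≠ 0 := by
    by_cases hc : (z0 - y0) + X * (z0 - x0) = 0
    · obtain ⟨w, hw⟩ := Infinite.exists_notMem_finset (S ∪ {x0, y0, z0})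
      simp only [Finset.mem_union, Finset.mem_insert, Finset.mem_singleton, not_or] at hw
      refine ⟨w, hw.1, fun h => hw.2.1 h.symm, fun h => hw.2.2.1 h.symm,
        fun h => hw.2.2.2 h.symm, ?_⟩
      have : (z0 - y0) * (x0 - w) + X * ((z0 - x0) * (y0 - w))
          = X * (z0 - x0) * (y0 - x0) := by linear_combination (x0 - w) * hc
      rw [this]
      exact mul_ne_zero (mul_ne_zero hX (sub_ne_zero.mpr (Ne.symm hxz)))
        (sub_ne_zero.mpr (fun h => hxy h.symm))
    · set w0 := ((z0 - y0) * x0 + X * ((z0 - x0) * y0)) / ((z0 - y0) + X * (z0 - x0)) with hw0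
      obtain ⟨w, hw⟩ := Infinite.exists_notMem_finset (S ∪ {x0, y0, z0, w0})
      simp only [Finset.mem_union, Finset.mem_insert, Finset.mem_singleton, not_or] at hw
      refine ⟨w, hw.1, fun h => hw.2.1 h.symm, fun h => hw.2.2.1 h.symm,
        fun h => hw.2.2.2.1 h.symm, ?_⟩
      intro h0
      apply hw.2.2.2.2
      rw [hw0, eq_div_iff hc]
      linear_combination -h0
  obtain ⟨w, hwS, h1, h2, h3, h4⟩ := main
  refine ⟨w, hwS, h1, h2, h3, ?_⟩
  rw [inv_sub h2 h3, inv_sub h1 h3]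
  have e1 : x0 - w ≠ 0 := sub_ne_zero.mpr h1
  have e2 : y0 - w ≠ 0 := sub_ne_zero.mpr h2
  have e3 : z0 - w ≠ 0 := sub_ne_zero.mpr h3
  have : (z0 - y0) / ((y0 - w) * (z0 - w)) + X * ((z0 - x0) / ((x0 - w) * (z0 - w)))
      = ((z0 - y0) * (x0 - w) + X * ((z0 - x0) * (y0 - w)))
        / ((x0 - w) * ((y0 - w) * (z0 - w))) := by
    field_simp
  rw [this]
  exact div_ne_zero h4 (mul_ne_zero e1 (mul_ne_zero e2 e3))

/-- Möbius map through three points -/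
lemma m3 (x y z x' y' z' : ℂ) (h1 : x ≠ y) (h2 : y ≠ z) (h3 : x ≠ z)
    (h1' : x' ≠ y') (h2' : y' ≠ z') (h3' : x' ≠ z') :
    ∃ a b c d : ℂ, a * d - b * c ≠ 0 ∧
      (c * x + d ≠ 0 ∧ (a * x + b) / (c * x + d) = x') ∧
      (c * y + d ≠ 0 ∧ (a * y + b) / (c * y + d) = y') ∧
      (c * z + d ≠ 0 ∧ (a * z + b) / (c * z + d) = z') := by
  have u1 : x - y ≠ 0 := sub_ne_zero.mpr h1
  have u2 : y - z ≠ 0 := sub_ne_zero.mpr h2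
  have u3 : x - z ≠ 0 := sub_ne_zero.mpr h3
  have v1 : x' - y' ≠ 0 := sub_ne_zero.mpr h1'
  have v2 : y' - z' ≠ 0 := sub_ne_zero.mpr h2'
  have v3 : x' - z' ≠ 0 := sub_ne_zero.mpr h3'
  refine ⟨-(z' * ((y' - x') * (y - z))) + x' * ((y' - z') * (y - x)),
    z' * (x * ((y' - x') * (y - z))) - x' * (z * ((y' - z') * (y - x))),
    -((y' - x') * (y - z)) + (y' - z') * (y - x),
    (y' - x') * (x * (y - z)) - (y' - z') * (z * (y - x)), ?_, ⟨?_, ?_⟩, ⟨?_, ?_⟩, ⟨?_, ?_⟩⟩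
  · have : (-(z' * ((y' - x') * (y - z))) + x' * ((y' - z') * (y - x)))
        * ((y' - x') * (x * (y - z)) - (y' - z') * (z * (y - x)))
      - (z' * (x * ((y' - x') * (y - z))) - x' * (z * ((y' - z') * (y - x))))
        * (-((y' - x') * (y - z)) + (y' - z') * (y - x))
      = (y' - z') * (y' - x') * (x' - z') * ((y - z) * (y - x) * (x - z)) := by ring
    rw [this]
    refine mul_ne_zero (mul_ne_zero (mul_ne_zero v2 (fun h => v1 (by linear_combination -h)) ) v3)
      (mul_ne_zero (mul_ne_zero u2 (fun h => u1 (by linear_combination -h))) u3)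
  · have : (-((y' - x') * (y - z)) + (y' - z') * (y - x)) * x
        + ((y' - x') * (x * (y - z)) - (y' - z') * (z * (y - x)))
      = (y' - z') * (y - x) * (x - z) := by ring
    rw [this]
    exact mul_ne_zero (mul_ne_zero v2 (fun h => u1 (by linear_combination -h))) u3
  · rw [div_eq_iff]
    · ring
    · have : (-((y' - x') * (y - z)) + (y' - z') * (y - x)) * x
          + ((y' - x') * (x * (y - z)) - (y' - z') * (z * (y - x)))
        = (y' - z') * (y - x) * (x - z) := by ring
      rw [this]
      exact mul_ne_zero (mul_ne_zero v2 (fun h => u1 (by linear_combination -h))) u3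
  · have : (-((y' - x') * (y - z)) + (y' - z') * (y - x)) * y
        + ((y' - x') * (x * (y - z)) - (y' - z') * (z * (y - x)))
      = (y - z) * (x - y) * (z' - x') := by ring
    rw [this]
    exact mul_ne_zero (mul_ne_zero u2 u1) (fun h => v3 (by linear_combination -h))
  · rw [div_eq_iff]
    · ring
    · have : (-((y' - x') * (y - z)) + (y' - z') * (y - x)) * y
          + ((y' - x') * (x * (y - z)) - (y' - z') * (z * (y - x)))
        = (y - z) * (x - y) * (z' - x') := by ring
      rw [this]
      exact mul_ne_zero (mul_ne_zero u2 u1) (fun h => v3 (by linear_combination -h))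
  · have : (-((y' - x') * (y - z)) + (y' - z') * (y - x)) * z
        + ((y' - x') * (x * (y - z)) - (y' - z') * (z * (y - x)))
      = (y' - x') * (y - z) * (x - z) := by ring
    rw [this]
    exact mul_ne_zero (mul_ne_zero (fun h => v1 (by linear_combination -h)) u2) u3
  · rw [div_eq_iff]
    · ring
    · have : (-((y' - x') * (y - z)) + (y' - z') * (y - x)) * z
          + ((y' - x') * (x * (y - z)) - (y' - z') * (z * (y - x)))
        = (y' - x') * (y - z) * (x - z) := by ring
      rw [this]
      exact mul_ne_zero (mul_ne_zero (fun h => v1 (by linear_combination -h)) u2) u3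

section Basic

variable {m : ℕ} {T : Finset (ℕ × ℕ)}

lemma edge_bounds (hd : ∀ p ∈ T, IsDiag m p) {s t : ℕ} (h : IsEdge m T (s, t)) :
    s < t ∧ t < m := by
  rcases h with h | h
  · have := hd _ h
    rcases this with ⟨h1, h2, h3⟩
    exact ⟨by omega, h2⟩
  · rcases h with ⟨h1, h2⟩ | ⟨h1, h2, h3⟩ <;> simp_all <;> omega

lemma edge_mem {s t : ℕ} (h : IsEdge m T (s, t)) (h1 : ¬(t = s + 1)) (h2 : ¬(s = 0 ∧ t = m - 1)) :
    (s, t) ∈ T := by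
  rcases h with h | h
  · exact h
  · rcases h with ⟨ha, hb⟩ | ⟨ha, hb, hc⟩
    · exact absurd ha h1
    · exact absurd ⟨ha, hb⟩ h2

variable (hd : ∀ p ∈ T, IsDiag m p) (hnc : ∀ p ∈ T, ∀ q ∈ T, ¬Cross p q)
include hd hnc

lemma no_two_between {p1 b b' p2 : ℕ} (hbb : b < b')
    (h1 : IsTri m T p1 b p2) (h2 : IsTri m T p1 b' p2) : False := by
  obtain ⟨e1, e2, e3, e4, e5⟩ := h1
  obtain ⟨f1, f2, f3, f4, f5⟩ := h2
  have hm : p2 < m := (edge_bounds hd e4).2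
  have m1 : (p1, b') ∈ T := edge_mem f3 (by omega) (by omega)
  have m2 : (b, p2) ∈ T := edge_mem e4 (by omega) (by omega)
  exact hnc _ m1 _ m2 (Or.inl ⟨by simpa using e1, by simpa using hbb, by simpa using f2⟩)

lemma no_two_right {p1 p2 d d' : ℕ} (hdd : d < d')
    (h1 : IsTri m T p1 p2 d) (h2 : IsTri m T p1 p2 d') : False := by
  obtain ⟨e1, e2, e3, e4, e5⟩ := h1
  obtain ⟨f1, f2, f3, f4, f5⟩ := h2
  have hm : d' < m := (edge_bounds hd f4).2
  have m1 : (p1, d) ∈ T := edge_mem e5 (by omega) (by omega)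
  have m2 : (p2, d') ∈ T := edge_mem f4 (by omega) (by omega)
  exact hnc _ m1 _ m2 (Or.inl ⟨by simpa using e1, by simpa using e2, by simpa using hdd⟩)

lemma no_two_left {p1 p2 d d' : ℕ} (hdd : d < d')
    (h1 : IsTri m T d p1 p2) (h2 : IsTri m T d' p1 p2) : False := by
  obtain ⟨e1, e2, e3, e4, e5⟩ := h1
  obtain ⟨f1, f2, f3, f4, f5⟩ := h2
  have hm : p2 < m := (edge_bounds hd e4).2
  have m1 : (d, p1) ∈ T := edge_mem e3 (by omega) (by omega)
  have m2 : (d', p2) ∈ T := edge_mem f5 (by omega) (by omega)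
  exact hnc _ m1 _ m2 (Or.inl ⟨by simpa using hdd, by simpa using f1, by simpa using f2⟩)

lemma no_left_right {p1 p2 d d' : ℕ} (hd1 : d < p1) (hd2 : p2 < d')
    (h1 : IsTri m T d p1 p2) (h2 : IsTri m T p1 p2 d') : False := by
  obtain ⟨e1, e2, e3, e4, e5⟩ := h1
  obtain ⟨f1, f2, f3, f4, f5⟩ := h2
  have hm : d' < m := (edge_bounds hd f4).2
  have m1 : (d, p2) ∈ T := edge_mem e5 (by omega) (by omega)
  have m2 : (p1, d') ∈ T := edge_mem f5 (by omega) (by omega)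
  exact hnc _ m1 _ m2 (Or.inl ⟨by simpa using hd1, by simpa using e2, by simpa using hd2⟩)

lemma quad_unique {p : ℕ × ℕ} {b d b' d' : ℕ}
    (h1 : Quad m T p b d) (h2 : Quad m T p b' d') : b = b' ∧ d = d' := by
  obtain ⟨t1, s1⟩ := h1
  obtain ⟨t2, s2⟩ := h2
  constructor
  · rcases lt_trichotomy b b' with h | h | h
    · exact absurd (no_two_between hd hnc h t1 t2) id
    · exact h
    · exact absurd (no_two_between hd hnc h t2 t1) id
  · rcases s1 with ⟨hdp, ht⟩ | ⟨hdp, ht⟩ <;> rcases s2 with ⟨hdp', ht'⟩ | ⟨hdp', ht'⟩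
    · rcases lt_trichotomy d d' with h | h | h
      · exact absurd (no_two_left hd hnc h ht ht') id
      · exact h
      · exact absurd (no_two_left hd hnc h ht' ht) id
    · exact absurd (no_left_right hd hnc hdp hdp' ht ht') id
    · exact absurd (no_left_right hd hnc hdp' hdp ht' ht) id
    · rcases lt_trichotomy d d' with h | h | h
      · exact absurd (no_two_right hd hnc h ht ht') id
      · exact h
      · exact absurd (no_two_right hd hnc h ht' ht) id

end Basic

def clps (a s i : ℕ) : ℕ := if i ≤ a then i else i - (s - 1)

lemma clps_mono {a s i j : ℕ} (hi : i ≤ a ∨ a + s ≤ i) (hj : j ≤ a ∨ a + s ≤ j)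
    (hs : 1 ≤ s) (h : clps a s i < clps a s j) : i < j := by
  unfold clps at h
  split_ifs at h <;> omega

lemma clps_inj {a s i j : ℕ} (hi : i ≤ a ∨ a + s ≤ i) (hj : j ≤ a ∨ a + s ≤ j)
    (hs : 1 ≤ s) (h : clps a s i = clps a s j) : i = j := by
  unfold clps at h
  split_ifs at h <;> omega

lemma clps_cross {a s : ℕ} {q r : ℕ × ℕ} (hs : 1 ≤ s)
    (w1 : q.1 ≤ a ∨ a + s ≤ q.1) (w2 : q.2 ≤ a ∨ a + s ≤ q.2)
    (w3 : r.1 ≤ a ∨ a + s ≤ r.1) (w4 : r.2 ≤ a ∨ a + s ≤ r.2)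
    (hc : Cross (clps a s q.1, clps a s q.2) (clps a s r.1, clps a s r.2)) : Cross q r := by
  rw [Cross] at hc ⊢
  simp only at hc
  rcases hc with ⟨h1, h2, h3⟩ | ⟨h1, h2, h3⟩
  · exact Or.inl ⟨clps_mono w1 w3 hs h1, clps_mono w3 w2 hs h2, clps_mono w2 w4 hs h3⟩
  · exact Or.inr ⟨clps_mono w3 w1 hs h1, clps_mono w1 w4 hs h2, clps_mono w4 w2 hs h3⟩

lemma clps_diag {m a s : ℕ} {q : ℕ × ℕ} (hq : IsDiag m q) (hs : 2 ≤ s) (ham : a + s < m)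
    (w1 : q.1 ≤ a ∨ a + s ≤ q.1) (w2 : q.2 ≤ a ∨ a + s ≤ q.2)
    (hne : ¬(q.1 = a ∧ q.2 = a + s)) :
    IsDiag (m - s + 1) (clps a s q.1, clps a s q.2) := by
  obtain ⟨h1, h2, h3⟩ := hq
  unfold IsDiag clps
  simp only
  split_ifs <;> omega

lemma min_span_avoid {m : ℕ} {D : Finset (ℕ × ℕ)} (hd : ∀ p ∈ D, IsDiag m p)
    (hnc : ∀ p ∈ D, ∀ q ∈ D, ¬Cross p q) {p : ℕ × ℕ} (hp : p ∈ D)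
    (hmin : ∀ q ∈ D, p.2 - p.1 ≤ q.2 - q.1) (q : ℕ × ℕ) (hq : q ∈ D) (hne : q ≠ p) :
    (q.1 ≤ p.1 ∨ p.2 ≤ q.1) ∧ (q.2 ≤ p.1 ∨ p.2 ≤ q.2) := by
  obtain ⟨hq1, hq2, hq3⟩ := hd _ hq
  obtain ⟨hp1, hp2, hp3⟩ := hd _ hp
  have hspan := hmin _ hq
  have hncpq := hnc _ hp _ hq
  have hne' : q.1 ≠ p.1 ∨ q.2 ≠ p.2 := by
    by_contra h
    push_neg at h
    exact hne (Prod.ext h.1 h.2)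
  rw [Cross] at hncpq
  constructor
  · by_contra h
    push_neg at h
    obtain ⟨ha, hb⟩ := h
    rcases le_or_gt q.2 p.2 with h2 | h2
    · omega
    · exact hncpq (Or.inl ⟨by omega, by omega, h2⟩)
  · by_contra h
    push_neg at h
    obtain ⟨ha, hb⟩ := h
    rcases le_or_gt p.1 q.1 with h2 | h2
    · omega
    · exact hncpq (Or.inr ⟨h2, by omega, by omega⟩)

/-- collapsing the minimal diagonal: the data needed by both `ncbound` and `ear_exists` -/
lemma collapse_step {m : ℕ} {D : Finset (ℕ × ℕ)} (hd : ∀ p ∈ D, IsDiag m p)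
    (hnc : ∀ p ∈ D, ∀ q ∈ D, ¬Cross p q) {p : ℕ × ℕ} (hp : p ∈ D)
    (hmin : ∀ q ∈ D, p.2 - p.1 ≤ q.2 - q.1) :
    ∃ D' : Finset (ℕ × ℕ), D'.card = D.card - 1 ∧
      (∀ q ∈ D', IsDiag (m - (p.2 - p.1) + 1) q) ∧ (∀ q ∈ D', ∀ r ∈ D', ¬Cross q r) := by
  obtain ⟨hp1, hp2, hp3⟩ := hd _ hp
  set s := p.2 - p.1 with hs
  set f : ℕ × ℕ → ℕ × ℕ := fun q => (clps p.1 s q.1, clps p.1 s q.2) with hf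
  have havoid : ∀ q ∈ D.erase p,
      (q.1 ≤ p.1 ∨ p.1 + s ≤ q.1) ∧ (q.2 ≤ p.1 ∨ p.1 + s ≤ q.2) := by
    intro q hq
    have := min_span_avoid hd hnc hp hmin q (D.mem_of_mem_erase hq) (D.ne_of_mem_erase hq)
    omega
  refine ⟨Finset.image f (D.erase p), ?_, ?_, ?_⟩
  · rw [Finset.card_image_of_injOn, Finset.card_erase_of_mem hp]
    intro q hq r hr hqr
    rw [Finset.mem_coe] at hq hr
    obtain ⟨a1, a2⟩ := havoid _ hq
    obtain ⟨b1, b2⟩ := havoid _ hr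
    rw [hf, Prod.ext_iff] at hqr
    exact Prod.ext (clps_inj a1 b1 (by omega) hqr.1) (clps_inj a2 b2 (by omega) hqr.2)
  · intro q hq
    obtain ⟨r, hr, rfl⟩ := Finset.mem_image.mp hq
    obtain ⟨a1, a2⟩ := havoid _ hr
    have hne3 : ¬(r.1 = p.1 ∧ r.2 = p.1 + s) := by
      intro h
      exact (D.ne_of_mem_erase hr) (Prod.ext h.1 (by omega))
    exact clps_diag (hd _ (D.mem_of_mem_erase hr)) (by omega) (by omega) a1 a2 hne3
  · intro q hq r hr
    obtain ⟨q0, hq0, rfl⟩ := Finset.mem_image.mp hq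
    obtain ⟨r0, hr0, rfl⟩ := Finset.mem_image.mp hr
    obtain ⟨a1, a2⟩ := havoid _ hq0
    obtain ⟨b1, b2⟩ := havoid _ hr0
    intro hc
    exact hnc _ (D.mem_of_mem_erase hq0) _ (D.mem_of_mem_erase hr0)
      (clps_cross (by omega) a1 a2 b1 b2 hc)

lemma ncbound : ∀ m : ℕ, ∀ D : Finset (ℕ × ℕ), (∀ p ∈ D, IsDiag m p) →
    (∀ p ∈ D, ∀ q ∈ D, ¬Cross p q) → D.card ≤ m - 3 := by
  intro m
  induction m using Nat.strong_induction_on with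
  | _ m IH =>
    intro D hd hnc
    rcases D.eq_empty_or_nonempty with rfl | hne
    · simp
    obtain ⟨p, hp, hmin⟩ := D.exists_min_image (fun q => q.2 - q.1) hne
    obtain ⟨D', hc1, hc2, hc3⟩ := collapse_step hd hnc hp hmin
    obtain ⟨hp1, hp2, hp3⟩ := hd _ hp
    have hIH := IH (m - (p.2 - p.1) + 1) (by omega) D' hc2 hc3
    have hpos : 0 < D.card := Finset.card_pos.mpr ⟨p, hp⟩
    omega

lemma ear_exists {m : ℕ} {T : Finset (ℕ × ℕ)} (hm : 4 ≤ m)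
    (hd : ∀ p ∈ T, IsDiag m p) (hnc : ∀ p ∈ T, ∀ q ∈ T, ¬Cross p q)
    (hcard : T.card = m - 3) :
    ∃ k, 1 ≤ k ∧ k + 2 ≤ m ∧ (k - 1, k + 1) ∈ T := by
  have hne : T.Nonempty := by
    rw [← Finset.card_pos, hcard]
    omega
  obtain ⟨p, hp, hmin⟩ := T.exists_min_image (fun q => q.2 - q.1) hne
  obtain ⟨hp1, hp2, hp3⟩ := hd _ hp
  rcases eq_or_lt_of_le (show p.1 + 2 ≤ p.2 by omega) with h | h
  · refine ⟨p.1 + 1, by omega, by omega, ?_⟩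
    have : (p.1 + 1 - 1, p.1 + 1 + 1) = p := Prod.ext (by simp) (by simp; omega)
    rwa [this]
  · exfalso
    obtain ⟨D', hc1, hc2, hc3⟩ := collapse_step hd hnc hp hmin
    have hIH := ncbound (m - (p.2 - p.1) + 1) D' hc2 hc3
    omega

def rho (k i : ℕ) : ℕ := if i < k then i else i - 1

def lft (k i : ℕ) : ℕ := if i < k then i else i + 1

def derT (k : ℕ) (T : Finset (ℕ × ℕ)) : Finset (ℕ × ℕ) :=
  (T.erase (k - 1, k + 1)).image (fun q => (rho k q.1, rho k q.2))

lemma rho_lft {k i : ℕ} : rho k (lft k i) = i := by unfold rho lft; split_ifs <;> omega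

lemma lft_rho {k i : ℕ} (h : i ≠ k) : lft k (rho k i) = i := by
  unfold rho lft; split_ifs <;> omega

lemma lft_mono {k i j : ℕ} (h : i < j) : lft k i < lft k j := by
  unfold lft; split_ifs <;> omega

lemma lft_ne {k i : ℕ} : lft k i ≠ k := by unfold lft; split_ifs <;> omega

lemma rho_lt {k i j : ℕ} (h : rho k i < rho k j) : i < j := by
  unfold rho at h; split_ifs at h <;> omega

lemma rho_mono {k i j : ℕ} (hi : i ≠ k) (hj : j ≠ k) (h : i < j) : rho k i < rho k j := by
  unfold rho; split_ifs <;> omega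

lemma rho_inj {k i j : ℕ} (hi : i ≠ k) (hj : j ≠ k) (h : rho k i = rho k j) : i = j := by
  unfold rho at h; split_ifs at h <;> omega

lemma rho_diag {m k : ℕ} {q : ℕ × ℕ} (hq : IsDiag m q) (h1 : q.1 ≠ k) (h2 : q.2 ≠ k)
    (hne : ¬(q.1 = k - 1 ∧ q.2 = k + 1)) (hk1 : 1 ≤ k) (hk2 : k + 2 ≤ m) :
    IsDiag (m - 1) (rho k q.1, rho k q.2) := by
  obtain ⟨a1, a2, a3⟩ := hq
  unfold IsDiag rho
  simp only
  split_ifs <;> omega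

section Ear

variable {m k : ℕ} {T : Finset (ℕ × ℕ)}
  (hd : ∀ p ∈ T, IsDiag m p) (hnc : ∀ p ∈ T, ∀ q ∈ T, ¬Cross p q)
  (hear : (k - 1, k + 1) ∈ T) (hk1 : 1 ≤ k) (hk2 : k + 2 ≤ m)

include hd hnc hear hk1 hk2

lemma not_touch {q : ℕ × ℕ} (hq : q ∈ T) : q.1 ≠ k ∧ q.2 ≠ k := by
  obtain ⟨a1, a2, a3⟩ := hd _ hq
  constructor
  · intro h
    exact hnc _ hear _ hq (Or.inl ⟨by simp; omega, by simp; omega, by simp; omega⟩)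
  · intro h
    exact hnc _ hear _ hq (Or.inr ⟨by simp; omega, by simp; omega, by simp; omega⟩)

lemma der_mem {q : ℕ × ℕ} (hq : q ∈ T) (hne : q ≠ (k - 1, k + 1)) :
    (rho k q.1, rho k q.2) ∈ derT k T :=
  Finset.mem_image.mpr ⟨q, Finset.mem_erase.mpr ⟨hne, hq⟩, rfl⟩

lemma der_elim {q : ℕ × ℕ} (hq : q ∈ derT k T) :
    (lft k q.1, lft k q.2) ∈ T ∧ (lft k q.1, lft k q.2) ≠ (k - 1, k + 1) := by
  obtain ⟨q0, hq0, him⟩ := Finset.mem_image.mp hq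
  have h1 := Finset.mem_of_mem_erase hq0
  have h2 := Finset.ne_of_mem_erase hq0
  obtain ⟨n1, n2⟩ := not_touch hd hnc hear hk1 hk2 h1
  rw [Prod.ext_iff] at him
  simp only at him
  have e1 : lft k q.1 = q0.1 := by rw [← him.1, lft_rho n1]
  have e2 : lft k q.2 = q0.2 := by rw [← him.2, lft_rho n2]
  rw [e1, e2, Prod.mk.eta]
  exact ⟨h1, h2⟩

lemma der_tri (hcard : T.card = m - 3) : IsTriangulation (m - 1) (derT k T) := by
  refine ⟨?_, ?_, ?_⟩
  · intro q hq
    obtain ⟨q0, hq0, rfl⟩ := Finset.mem_image.mp hq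
    have h1 := Finset.mem_of_mem_erase hq0
    obtain ⟨n1, n2⟩ := not_touch hd hnc hear hk1 hk2 h1
    refine rho_diag (hd _ h1) n1 n2 ?_ hk1 hk2
    intro h
    exact (Finset.ne_of_mem_erase hq0) (Prod.ext h.1 h.2)
  · intro q hq r hr
    obtain ⟨q0, hq0, rfl⟩ := Finset.mem_image.mp hq
    obtain ⟨r0, hr0, rfl⟩ := Finset.mem_image.mp hr
    intro hc
    apply hnc _ (Finset.mem_of_mem_erase hq0) _ (Finset.mem_of_mem_erase hr0)
    rw [Cross] at hc ⊢
    simp only at hc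
    rcases hc with ⟨c1, c2, c3⟩ | ⟨c1, c2, c3⟩
    · exact Or.inl ⟨rho_lt c1, rho_lt c2, rho_lt c3⟩
    · exact Or.inr ⟨rho_lt c1, rho_lt c2, rho_lt c3⟩
  · rw [derT, Finset.card_image_of_injOn, Finset.card_erase_of_mem hear, hcard]
    · omega
    · intro q hq r hr hqr
      rw [Finset.mem_coe] at hq hr
      obtain ⟨a1, a2⟩ := not_touch hd hnc hear hk1 hk2 (Finset.mem_of_mem_erase hq)
      obtain ⟨b1, b2⟩ := not_touch hd hnc hear hk1 hk2 (Finset.mem_of_mem_erase hr)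
      rw [Prod.ext_iff] at hqr
      exact Prod.ext (rho_inj a1 b1 hqr.1) (rho_inj a2 b2 hqr.2)

lemma edge_down {a b : ℕ} (hab : IsEdge m T (a, b)) (ha : a ≠ k) (hb : b ≠ k) :
    IsEdge (m - 1) (derT k T) (rho k a, rho k b) := by
  rcases hab with h | h
  · by_cases hne : (a, b) = (k - 1, k + 1)
    · rw [Prod.ext_iff] at hne
      simp only at hne
      right
      left
      unfold rho
      split_ifs <;> omega
    · exact Or.inl (der_mem hd hnc hear hk1 hk2 h hne)
  · rcases h with ⟨h1, h2⟩ | ⟨h1, h2, h3⟩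
    · simp only at h1 h2
      right
      left
      unfold rho
      split_ifs <;> omega
    · simp only at h1 h2 h3
      right
      right
      have e1 : rho k a = 0 := by unfold rho; split_ifs <;> omega
      have e2 : rho k b = m - 1 - 1 := by unfold rho; split_ifs <;> omega
      exact ⟨e1, by rw [e2], by omega⟩

lemma edge_up {a b : ℕ} (hab : IsEdge (m - 1) (derT k T) (a, b)) :
    IsEdge m T (lft k a, lft k b) := by
  rcases hab with h | h
  · exact Or.inl (der_elim hd hnc hear hk1 hk2 h).1
  · rcases h with ⟨h1, h2⟩ | ⟨h1, h2, h3⟩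
    · simp only at h1 h2
      rcases lt_trichotomy (a + 1) k with hc | hc | hc
      · right; left
        unfold lft
        split_ifs <;> omega
      · left
        have e1 : lft k a = k - 1 := by unfold lft; split_ifs <;> omega
        have e2 : lft k b = k + 1 := by unfold lft; split_ifs <;> omega
        rw [e1, e2]
        exact hear
      · right; left
        unfold lft
        split_ifs <;> omega
    · simp only at h1 h2 h3
      right; right
      have e1 : lft k a = 0 := by unfold lft; split_ifs <;> omega
      have e2 : lft k b = m - 1 := by unfold lft; split_ifs <;> omega
      exact ⟨e1, e2, by omega⟩

lemma tri_down {a b c : ℕ} (h : IsTri m T a b c) (ha : a ≠ k) (hb : b ≠ k) (hc : c ≠ k) :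
    IsTri (m - 1) (derT k T) (rho k a) (rho k b) (rho k c) := by
  obtain ⟨o1, o2, e1, e2, e3⟩ := h
  exact ⟨rho_mono ha hb o1, rho_mono hb hc o2, edge_down hd hnc hear hk1 hk2 e1 ha hb,
    edge_down hd hnc hear hk1 hk2 e2 hb hc, edge_down hd hnc hear hk1 hk2 e3 ha hc⟩

lemma tri_up {a b c : ℕ} (h : IsTri (m - 1) (derT k T) a b c) :
    IsTri m T (lft k a) (lft k b) (lft k c) := by
  obtain ⟨o1, o2, e1, e2, e3⟩ := h
  exact ⟨lft_mono o1, lft_mono o2, edge_up hd hnc hear hk1 hk2 e1,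
    edge_up hd hnc hear hk1 hk2 e2, edge_up hd hnc hear hk1 hk2 e3⟩

/-- edges of `T` incident to the ear vertex `k` are only the two sides -/
lemma edge_at_k {a : ℕ} (h : IsEdge m T (a, k) ∨ IsEdge m T (k, a)) :
    a = k - 1 ∨ a = k + 1 := by
  rcases h with h | h
  · rcases h with h | h
    · exact absurd rfl (not_touch hd hnc hear hk1 hk2 h).2
    · rcases h with ⟨h1, h2⟩ | ⟨h1, h2, h3⟩ <;> simp only at * <;> omega
  · rcases h with h | h
    · exact absurd rfl (not_touch hd hnc hear hk1 hk2 h).1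
    · rcases h with ⟨h1, h2⟩ | ⟨h1, h2, h3⟩ <;> simp only at * <;> omega

lemma quad_down {p : ℕ × ℕ} {b d : ℕ} (hp : p ∈ T) (hne : p ≠ (k - 1, k + 1))
    (h : Quad m T p b d) :
    b ≠ k ∧ d ≠ k ∧ Quad (m - 1) (derT k T) (rho k p.1, rho k p.2) (rho k b) (rho k d) := by
  obtain ⟨hp1, hp2⟩ := not_touch hd hnc hear hk1 hk2 hp
  obtain ⟨ht, hs⟩ := h
  obtain ⟨o1, o2, e1, e2, e3⟩ := ht
  have hb : b ≠ k := by
    intro hbk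
    have c1 := edge_at_k hd hnc hear hk1 hk2 (Or.inl (show IsEdge m T (p.1, k) by
      rwa [hbk] at e1))
    have c2 := edge_at_k hd hnc hear hk1 hk2 (Or.inr (show IsEdge m T (k, p.2) by
      rwa [hbk] at e2))
    apply hne
    rw [Prod.ext_iff]
    obtain ⟨w1, w2, -⟩ := hd _ hp
    constructor <;> simp only <;> omega
  have hdk : d ≠ k := by
    rcases hs with ⟨ho, htri⟩ | ⟨ho, htri⟩
    · intro hdk2
      obtain ⟨u1, u2, f1, f2, f3⟩ := htri
      have := edge_at_k hd hnc hear hk1 hk2 (Or.inr (show IsEdge m T (k, p.2) by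
        rwa [hdk2] at f3))
      omega
    · intro hdk2
      obtain ⟨u1, u2, f1, f2, f3⟩ := htri
      have := edge_at_k hd hnc hear hk1 hk2 (Or.inl (show IsEdge m T (p.1, k) by
        rwa [hdk2] at f3))
      omega
  refine ⟨hb, hdk, ?_, ?_⟩
  · exact tri_down hd hnc hear hk1 hk2 ⟨o1, o2, e1, e2, e3⟩ hp1 hb hp2
  · rcases hs with ⟨ho, htri⟩ | ⟨ho, htri⟩
    · exact Or.inl ⟨rho_mono hdk hp1 ho, tri_down hd hnc hear hk1 hk2 htri hdk hp1 hp2⟩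
    · exact Or.inr ⟨rho_mono hp2 hdk ho, tri_down hd hnc hear hk1 hk2 htri hp1 hp2 hdk⟩

lemma quad_up {q : ℕ × ℕ} {b d : ℕ} (h : Quad (m - 1) (derT k T) q b d) :
    Quad m T (lft k q.1, lft k q.2) (lft k b) (lft k d) := by
  obtain ⟨ht, hs⟩ := h
  refine ⟨tri_up hd hnc hear hk1 hk2 ht, ?_⟩
  rcases hs with ⟨ho, htri⟩ | ⟨ho, htri⟩
  · exact Or.inl ⟨lft_mono ho, tri_up hd hnc hear hk1 hk2 htri⟩
  · exact Or.inr ⟨lft_mono ho, tri_up hd hnc hear hk1 hk2 htri⟩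

end Ear
lemma side_tri : ∀ m : ℕ, 3 ≤ m → ∀ T : Finset (ℕ × ℕ), IsTriangulation m T →
    ∀ i : ℕ, i + 2 ≤ m →
    ∃ e, (e < i ∧ IsTri m T e i (i + 1)) ∨ (i + 1 < e ∧ IsTri m T i (i + 1) e) := by
  intro m
  induction m using Nat.strong_induction_on with
  | _ m IH =>
    intro hm3 T hT i hi
    obtain ⟨hd, hnc, hcard⟩ := hT
    rcases le_or_gt m 3 with hm | hm
    · -- m = 3
      have hm' : m = 3 := by omega
      subst hm'
      have htri : IsTri 3 T 0 1 2 := by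
        refine ⟨by omega, by omega, Or.inr (Or.inl ⟨rfl, by omega⟩),
          Or.inr (Or.inl ⟨rfl, by omega⟩), Or.inr (Or.inr ⟨rfl, rfl, by omega⟩)⟩
      have hi1 : i ≤ 1 := by omega
      interval_cases i
      · exact ⟨2, Or.inr ⟨by omega, htri⟩⟩
      · exact ⟨0, Or.inl ⟨by omega, htri⟩⟩
    · -- m ≥ 4
      obtain ⟨k, hk1, hk2, hear⟩ := ear_exists (by omega) hd hnc hcard
      have heartri : IsTri m T (k - 1) k (k + 1) := by
        refine ⟨by omega, by omega, Or.inr (Or.inl ⟨by omega, by omega⟩),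
          Or.inr (Or.inl ⟨by omega, by omega⟩), Or.inl hear⟩
      rcases eq_or_ne i (k - 1) with hik1 | hik1
      · refine ⟨k + 1, Or.inr ⟨by omega, ?_⟩⟩
        rw [hik1, show k - 1 + 1 = k by omega]
        exact heartri
      rcases eq_or_ne i k with hik | hik
      · refine ⟨k - 1, Or.inl ⟨by omega, ?_⟩⟩
        rw [hik]
        exact heartri
      have hikk : i + 1 < k ∨ k < i := by omega
      have hT' := der_tri hd hnc hear hk1 hk2 hcard
      have hrr : rho k i + 1 = rho k (i + 1) := by unfold rho; split_ifs <;> omega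
      have hri : rho k i + 2 ≤ m - 1 := by unfold rho; split_ifs <;> omega
      obtain ⟨e, he⟩ := IH (m - 1) (by omega) (by omega) (derT k T) hT' (rho k i) hri
      have hlift : lft k (rho k i) = i := lft_rho hik
      have hlift2 : lft k (rho k i + 1) = i + 1 := by
        rw [hrr, lft_rho (by omega)]
      rcases he with ⟨he1, he2⟩ | ⟨he1, he2⟩
      · refine ⟨lft k e, Or.inl ⟨?_, ?_⟩⟩
        · have := lft_mono (k := k) he1
          omega
        · have := tri_up hd hnc hear hk1 hk2 he2
          rwa [hlift, hlift2] at this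
      · refine ⟨lft k e, Or.inr ⟨?_, ?_⟩⟩
        · have := lft_mono (k := k) he1
          omega
        · have := tri_up hd hnc hear hk1 hk2 he2
          rwa [hlift, hlift2] at this
lemma quad_lt {m : ℕ} {T : Finset (ℕ × ℕ)} (hd : ∀ p ∈ T, IsDiag m p) {p : ℕ × ℕ}
    {b d : ℕ} (h : Quad m T p b d) :
    p.1 < b ∧ b < p.2 ∧ p.2 < m ∧ d < m := by
  obtain ⟨⟨o1, o2, e1, e2, e3⟩, hs⟩ := h
  have hb2 := edge_bounds hd e2
  refine ⟨o1, o2, hb2.2, ?_⟩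
  rcases hs with ⟨ho, h1, h2, f1, f2, f3⟩ | ⟨ho, h1, h2, f1, f2, f3⟩
  · omega
  · exact (edge_bounds hd f2).2

theorem exist_sol : ∀ m : ℕ, 3 ≤ m → ∀ T : Finset (ℕ × ℕ), IsTriangulation m T →
    ∀ X : ℕ × ℕ → ℂ, (∀ p ∈ T, X p ≠ 0) →
    ∃ ψ : ℕ → ℂ, (∀ p : ℕ × ℕ, IsEdge m T p → ψ p.1 ≠ ψ p.2) ∧
      ∀ p ∈ T, ∀ b d : ℕ, Quad m T p b d →
        crossRatio (ψ p.1) (ψ b) (ψ p.2) (ψ d) = X p := by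
  intro m
  induction m using Nat.strong_induction_on with
  | _ m IH =>
    intro hm3 T hT X hX
    obtain ⟨hd, hnc, hcard⟩ := hT
    rcases le_or_gt m 3 with hm | hm
    · -- base case : m = 3, T = ∅
      have hm' : m = 3 := by omega
      subst hm'
      have hTe : T = ∅ := Finset.card_eq_zero.mp (by omega)
      subst hTe
      refine ⟨fun j => (j : ℂ), ?_, ?_⟩
      · intro p hp
        have hne : p.1 ≠ p.2 := by
          rcases hp with h | h
          · exact absurd h (Finset.notMem_empty _)
          · rcases h with ⟨h1, h2⟩ | ⟨h1, h2, h3⟩ <;> omega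
        exact fun h => hne (Nat.cast_injective h)
      · intro p hp
        exact absurd hp (Finset.notMem_empty _)
    · -- inductive step : m ≥ 4
      obtain ⟨k, hk1, hk2, hear⟩ := ear_exists (by omega) hd hnc hcard
      have heartri : IsTri m T (k - 1) k (k + 1) :=
        ⟨by omega, by omega, Or.inr (Or.inl ⟨by omega, by omega⟩),
          Or.inr (Or.inl ⟨by omega, by omega⟩), Or.inl hear⟩
      have hT' := der_tri hd hnc hear hk1 hk2 hcard
      obtain ⟨hd', hnc', hcard'⟩ := hT'
      have hX' : ∀ q ∈ derT k T, (fun q => X (lft k q.1, lft k q.2)) q ≠ 0 := by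
        intro q hq
        exact hX _ (der_elim hd hnc hear hk1 hk2 hq).1
      obtain ⟨ψ₀, gen₀, eq₀⟩ := IH (m - 1) (by omega) (by omega) (derT k T)
        ⟨hd', hnc', hcard'⟩ _ hX'
      have hrk1 : rho k (k - 1) = k - 1 := by unfold rho; split_ifs <;> omega
      have hrk2 : rho k (k + 1) = k := by unfold rho; split_ifs <;> omega
      have hside : IsEdge (m - 1) (derT k T) (k - 1, k) := Or.inr (Or.inl ⟨by omega, by omega⟩)
      have hxy0 : ψ₀ (k - 1) ≠ ψ₀ k := gen₀ (k - 1, k) hside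
      by_cases hop : ∃ e, (e < k - 1 ∧ IsTri m T e (k - 1) (k + 1)) ∨
          (k + 1 < e ∧ IsTri m T (k - 1) (k + 1) e)
      · -- the ear diagonal has a triangle on the other side
        obtain ⟨d₀, hd₀⟩ := hop
        have hd₀k : d₀ ≠ k := by rcases hd₀ with ⟨h, -⟩ | ⟨h, -⟩ <;> omega
        have hd₀m : d₀ < m := by
          rcases hd₀ with ⟨h, -, h2, -⟩ | ⟨h, -, -, -, f2, -⟩
          · omega
          · exact (edge_bounds hd f2).2
        have hrdm : rho k d₀ < m - 1 := by unfold rho; split_ifs <;> omega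
        have hedge1 : IsEdge (m - 1) (derT k T) (rho k d₀, k - 1) ∨
            IsEdge (m - 1) (derT k T) (k - 1, rho k d₀) := by
          rcases hd₀ with ⟨ho, h1, h2, e1, e2, e3⟩ | ⟨ho, h1, h2, e1, e2, e3⟩
          · left
            have := edge_down hd hnc hear hk1 hk2 e1 hd₀k (by omega)
            rwa [hrk1] at this
          · right
            have := edge_down hd hnc hear hk1 hk2 e3 (by omega) hd₀k
            rwa [hrk1] at this
        have hedge2 : IsEdge (m - 1) (derT k T) (rho k d₀, k) ∨
            IsEdge (m - 1) (derT k T) (k, rho k d₀) := by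
          rcases hd₀ with ⟨ho, h1, h2, e1, e2, e3⟩ | ⟨ho, h1, h2, e1, e2, e3⟩
          · left
            have := edge_down hd hnc hear hk1 hk2 e3 hd₀k (by omega)
            rwa [hrk2] at this
          · right
            have := edge_down hd hnc hear hk1 hk2 e2 (by omega) hd₀k
            rwa [hrk2] at this
        have hxz0 : ψ₀ (k - 1) ≠ ψ₀ (rho k d₀) := by
          rcases hedge1 with h | h
          · exact (gen₀ _ h).symm
          · exact gen₀ _ h
        have hyz0 : ψ₀ k ≠ ψ₀ (rho k d₀) := by
          rcases hedge2 with h | h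
          · exact (gen₀ _ h).symm
          · exact gen₀ _ h
        obtain ⟨w, hwS, hw1, hw2, hw3, hwB⟩ := badw (ψ₀ (k - 1)) (ψ₀ k) (ψ₀ (rho k d₀))
          (X (k - 1, k + 1)) (Finset.image ψ₀ (Finset.range (m - 1)))
          hxy0 hyz0 hxz0 (hX _ hear)
        have hwall : ∀ j, j < m - 1 → ψ₀ j ≠ w := by
          intro j hj h
          exact hwS (Finset.mem_image.mpr ⟨j, Finset.mem_range.mpr hj, h⟩)
        set ψ₁ : ℕ → ℂ := fun j => (ψ₀ j - w)⁻¹ with hψ₁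
        have hinv : ∀ i j, i < m - 1 → j < m - 1 → ψ₁ i = ψ₁ j → ψ₀ i = ψ₀ j := by
          intro i j hi hj h
          have h2 : ψ₀ i - w = ψ₀ j - w := inv_injective h
          exact sub_left_inj.mp h2
        have gen₁ : ∀ p : ℕ × ℕ, IsEdge (m - 1) (derT k T) p → ψ₁ p.1 ≠ ψ₁ p.2 := by
          intro p hp h
          obtain ⟨hb1, hb2⟩ := edge_bounds hd' hp
          exact gen₀ p hp (hinv _ _ (by omega) hb2 h)
        have eq₁ : ∀ q ∈ derT k T, ∀ b d : ℕ, Quad (m - 1) (derT k T) q b d →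
            crossRatio (ψ₁ q.1) (ψ₁ b) (ψ₁ q.2) (ψ₁ d) = X (lft k q.1, lft k q.2) := by
          intro q hq b d hqd
          have h0 := eq₀ q hq b d hqd
          obtain ⟨l1, l2, l3, l4⟩ := quad_lt hd' hqd
          have hq1 : q.1 < m - 1 := by omega
          rw [← h0]
          exact inv_cr (hwall _ (by omega)) (hwall _ (by omega)) (hwall _ l3) (hwall _ l4)
        have hx1 : ψ₁ (k - 1) ≠ ψ₁ k := gen₁ (k - 1, k) hside
        have hxz1 : ψ₁ (k - 1) ≠ ψ₁ (rho k d₀) := by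
          rcases hedge1 with h | h
          · exact (gen₁ _ h).symm
          · exact gen₁ _ h
        have hyz1 : ψ₁ k ≠ ψ₁ (rho k d₀) := by
          rcases hedge2 with h | h
          · exact (gen₁ _ h).symm
          · exact gen₁ _ h
        have hB : (ψ₁ k - ψ₁ (rho k d₀)) + X (k - 1, k + 1) * (ψ₁ (k - 1) - ψ₁ (rho k d₀))
            ≠ 0 := hwB
        obtain ⟨v, hv, hvx, hvy⟩ := cr_solve hx1 hyz1 hxz1 (hX _ hear) hB
        refine ⟨fun j => if j = k then v else ψ₁ (rho k j), ?_, ?_⟩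
        · intro p hp
          obtain ⟨hb1, hb2⟩ := edge_bounds hd hp
          have hp' : IsEdge m T (p.1, p.2) := by rwa [Prod.mk.eta]
          by_cases h1 : p.1 = k
          · have h2 := edge_at_k hd hnc hear hk1 hk2
              (Or.inr (show IsEdge m T (k, p.2) by rwa [h1] at hp'))
            have hp2 : p.2 = k + 1 := by omega
            simp only [h1, hp2, if_pos rfl, if_neg (show k + 1 ≠ k by omega), hrk2]
            exact hvy
          · by_cases h2 : p.2 = k
            · have h3 := edge_at_k hd hnc hear hk1 hk2
                (Or.inl (show IsEdge m T (p.1, k) by rwa [h2] at hp'))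
              have hp1 : p.1 = k - 1 := by omega
              simp only [h2, hp1, if_pos rfl, if_neg (show k - 1 ≠ k by omega), hrk1]
              exact fun h => hvx h.symm
            · have := gen₁ _ (edge_down hd hnc hear hk1 hk2 hp' h1 h2)
              simp only [if_neg h1, if_neg h2]
              exact this
        · intro p hp b d hq
          by_cases hpe : p = (k - 1, k + 1)
          · have hq' : Quad m T (k - 1, k + 1) b d := by rwa [hpe] at hq
            have hquadref : Quad m T (k - 1, k + 1) k d₀ := ⟨heartri, hd₀⟩
            obtain ⟨hbk, hdd⟩ := quad_unique hd hnc hq' hquadref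
            rw [hpe, hbk, hdd]
            simp only [if_neg (show k - 1 ≠ k by omega), if_pos rfl,
              if_neg (show k + 1 ≠ k by omega), if_neg hd₀k, hrk1, hrk2]
            exact hv
          · obtain ⟨hbk, hdk, hq'⟩ := quad_down hd hnc hear hk1 hk2 hp hpe hq
            obtain ⟨hp1k, hp2k⟩ := not_touch hd hnc hear hk1 hk2 hp
            have h0 := eq₁ _ (der_mem hd hnc hear hk1 hk2 hp hpe) _ _ hq'
            simp only [if_neg hp1k, if_neg hp2k, if_neg hbk, if_neg hdk]
            rw [h0]
            rw [lft_rho hp1k, lft_rho hp2k, Prod.mk.eta]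
      · -- no triangle on the other side of the ear
        obtain ⟨v, hv⟩ := Infinite.exists_notMem_finset ({ψ₀ (k - 1), ψ₀ k} : Finset ℂ)
        simp only [Finset.mem_insert, Finset.mem_singleton, not_or] at hv
        refine ⟨fun j => if j = k then v else ψ₀ (rho k j), ?_, ?_⟩
        · intro p hp
          obtain ⟨hb1, hb2⟩ := edge_bounds hd hp
          have hp' : IsEdge m T (p.1, p.2) := by rwa [Prod.mk.eta]
          by_cases h1 : p.1 = k
          · have h2 := edge_at_k hd hnc hear hk1 hk2
              (Or.inr (show IsEdge m T (k, p.2) by rwa [h1] at hp'))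
            have hp2 : p.2 = k + 1 := by omega
            simp only [h1, hp2, if_pos rfl, if_neg (show k + 1 ≠ k by omega), hrk2]
            exact hv.2
          · by_cases h2 : p.2 = k
            · have h3 := edge_at_k hd hnc hear hk1 hk2
                (Or.inl (show IsEdge m T (p.1, k) by rwa [h2] at hp'))
              have hp1 : p.1 = k - 1 := by omega
              simp only [h2, hp1, if_pos rfl, if_neg (show k - 1 ≠ k by omega), hrk1]
              exact fun h => hv.1 h.symm
            · have := gen₀ _ (edge_down hd hnc hear hk1 hk2 hp' h1 h2)
              simp only [if_neg h1, if_neg h2]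
              exact this
        · intro p hp b d hq
          by_cases hpe : p = (k - 1, k + 1)
          · exfalso
            have hq' : Quad m T (k - 1, k + 1) b d := by rwa [hpe] at hq
            exact hop ⟨d, hq'.2⟩
          · obtain ⟨hbk, hdk, hq'⟩ := quad_down hd hnc hear hk1 hk2 hp hpe hq
            obtain ⟨hp1k, hp2k⟩ := not_touch hd hnc hear hk1 hk2 hp
            have h0 := eq₀ _ (der_mem hd hnc hear hk1 hk2 hp hpe) _ _ hq'
            simp only [if_neg hp1k, if_neg hp2k, if_neg hbk, if_neg hdk]
            rw [h0]
            simp only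
            rw [lft_rho hp1k, lft_rho hp2k, Prod.mk.eta]
theorem uniq_sol : ∀ m : ℕ, 3 ≤ m → ∀ T : Finset (ℕ × ℕ), IsTriangulation m T →
    ∀ X : ℕ × ℕ → ℂ, (∀ p ∈ T, X p ≠ 0) → ∀ ψ ψ' : ℕ → ℂ,
    ((∀ p : ℕ × ℕ, IsEdge m T p → ψ p.1 ≠ ψ p.2) ∧
      ∀ p ∈ T, ∀ b d : ℕ, Quad m T p b d →
        crossRatio (ψ p.1) (ψ b) (ψ p.2) (ψ d) = X p) →
    ((∀ p : ℕ × ℕ, IsEdge m T p → ψ' p.1 ≠ ψ' p.2) ∧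
      ∀ p ∈ T, ∀ b d : ℕ, Quad m T p b d →
        crossRatio (ψ' p.1) (ψ' b) (ψ' p.2) (ψ' d) = X p) →
    ∃ a b c d : ℂ, a * d - b * c ≠ 0 ∧
      ∀ i < m, c * ψ i + d ≠ 0 ∧ ψ' i = (a * ψ i + b) / (c * ψ i + d) := by
  intro m
  induction m using Nat.strong_induction_on with
  | _ m IH =>
    intro hm3 T hT X hX ψ ψ' ⟨gen1, eq1⟩ ⟨gen2, eq2⟩
    obtain ⟨hd, hnc, hcard⟩ := hT
    rcases le_or_gt m 3 with hm | hm
    · -- base case : m = 3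
      have hm' : m = 3 := by omega
      subst hm'
      have s01 : IsEdge 3 T (0, 1) := Or.inr (Or.inl ⟨rfl, by omega⟩)
      have s12 : IsEdge 3 T (1, 2) := Or.inr (Or.inl ⟨rfl, by omega⟩)
      have s02 : IsEdge 3 T (0, 2) := Or.inr (Or.inr ⟨rfl, rfl, by omega⟩)
      obtain ⟨a, b, c, d, hdet, ⟨p1, p2⟩, ⟨q1, q2⟩, ⟨r1, r2⟩⟩ :=
        m3 (ψ 0) (ψ 1) (ψ 2) (ψ' 0) (ψ' 1) (ψ' 2)
          (gen1 _ s01) (gen1 _ s12) (gen1 _ s02)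
          (gen2 _ s01) (gen2 _ s12) (gen2 _ s02)
      refine ⟨a, b, c, d, hdet, ?_⟩
      intro i hi
      interval_cases i
      · exact ⟨p1, p2.symm⟩
      · exact ⟨q1, q2.symm⟩
      · exact ⟨r1, r2.symm⟩
    · -- inductive step : m ≥ 4
      obtain ⟨k, hk1, hk2, hear⟩ := ear_exists (by omega) hd hnc hcard
      have heartri : IsTri m T (k - 1) k (k + 1) :=
        ⟨by omega, by omega, Or.inr (Or.inl ⟨by omega, by omega⟩),
          Or.inr (Or.inl ⟨by omega, by omega⟩), Or.inl hear⟩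
      have hT' := der_tri hd hnc hear hk1 hk2 hcard
      obtain ⟨hd', hnc', hcard'⟩ := hT'
      have hX' : ∀ q ∈ derT k T, (fun q => X (lft k q.1, lft k q.2)) q ≠ 0 := fun q hq =>
        hX _ (der_elim hd hnc hear hk1 hk2 hq).1
      have hlk : lft k k = k + 1 := by unfold lft; split_ifs <;> omega
      have hlk1 : lft k (k - 1) = k - 1 := by unfold lft; split_ifs <;> omega
      -- transported solutions
      have genφ : ∀ p : ℕ × ℕ, IsEdge (m - 1) (derT k T) p →
          ψ (lft k p.1) ≠ ψ (lft k p.2) := by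
        intro p hp
        exact gen1 (lft k p.1, lft k p.2) (edge_up hd hnc hear hk1 hk2
          (show IsEdge (m - 1) (derT k T) (p.1, p.2) by rwa [Prod.mk.eta]))
      have genφ' : ∀ p : ℕ × ℕ, IsEdge (m - 1) (derT k T) p →
          ψ' (lft k p.1) ≠ ψ' (lft k p.2) := by
        intro p hp
        exact gen2 (lft k p.1, lft k p.2) (edge_up hd hnc hear hk1 hk2
          (show IsEdge (m - 1) (derT k T) (p.1, p.2) by rwa [Prod.mk.eta]))
      have eqφ : ∀ q ∈ derT k T, ∀ b d : ℕ, Quad (m - 1) (derT k T) q b d →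
          crossRatio (ψ (lft k q.1)) (ψ (lft k b)) (ψ (lft k q.2)) (ψ (lft k d))
            = X (lft k q.1, lft k q.2) := by
        intro q hq b d hqd
        exact eq1 _ (der_elim hd hnc hear hk1 hk2 hq).1 _ _
          (quad_up hd hnc hear hk1 hk2 hqd)
      have eqφ' : ∀ q ∈ derT k T, ∀ b d : ℕ, Quad (m - 1) (derT k T) q b d →
          crossRatio (ψ' (lft k q.1)) (ψ' (lft k b)) (ψ' (lft k q.2)) (ψ' (lft k d))
            = X (lft k q.1, lft k q.2) := by
        intro q hq b d hqd
        exact eq2 _ (der_elim hd hnc hear hk1 hk2 hq).1 _ _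
          (quad_up hd hnc hear hk1 hk2 hqd)
      obtain ⟨a, b, c, d, hdet, hAll⟩ := IH (m - 1) (by omega) (by omega) (derT k T)
        ⟨hd', hnc', hcard'⟩ _ hX' (fun i => ψ (lft k i)) (fun i => ψ' (lft k i))
        ⟨genφ, eqφ⟩ ⟨genφ', eqφ'⟩
      refine ⟨a, b, c, d, hdet, ?_⟩
      -- the quadrilateral around the ear diagonal
      obtain ⟨e, he⟩ := side_tri (m - 1) (by omega) (derT k T) ⟨hd', hnc', hcard'⟩
        (k - 1) (by omega)
      have hk11 : k - 1 + 1 = k := by omega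
      have hquad : ∃ d₀, d₀ = lft k e ∧ Quad m T (k - 1, k + 1) k d₀ := by
        refine ⟨lft k e, rfl, heartri, ?_⟩
        rcases he with ⟨he1, he2⟩ | ⟨he1, he2⟩
        · left
          rw [hk11] at he2
          have := tri_up hd hnc hear hk1 hk2 he2
          rw [hlk, hlk1] at this
          refine ⟨?_, this⟩
          have := lft_mono (k := k) he1
          omega
        · right
          rw [hk11] at he2
          have := tri_up hd hnc hear hk1 hk2 he2
          rw [hlk, hlk1] at this
          refine ⟨?_, this⟩
          rw [hk11] at he1
          have h2 := lft_mono (k := k) he1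
          rw [hlk] at h2
          omega
      obtain ⟨d₀, hd₀e, hquad⟩ := hquad
      have hd₀k : d₀ ≠ k := by rw [hd₀e]; exact lft_ne
      have hem : e < m - 1 := by
        rcases he with ⟨he1, he2⟩ | ⟨he1, he2⟩
        · obtain ⟨-, -, f1, -, -⟩ := he2
          have hb := edge_bounds hd' f1
          omega
        · obtain ⟨-, -, -, f2, -⟩ := he2
          exact (edge_bounds hd' f2).2
      -- distinctness of the three reference points
      have hxy : ψ (k - 1) ≠ ψ (k + 1) := gen1 _ (Or.inl hear)
      have hyz : ψ (k + 1) ≠ ψ d₀ := by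
        obtain ⟨-, hs⟩ := hquad
        rcases hs with ⟨ho, -, -, -, -, f3⟩ | ⟨ho, -, -, -, f2, -⟩
        · exact (gen1 _ f3).symm
        · exact gen1 _ f2
      have hxz : ψ (k - 1) ≠ ψ d₀ := by
        obtain ⟨-, hs⟩ := hquad
        rcases hs with ⟨ho, -, -, f1, -, -⟩ | ⟨ho, -, -, -, -, f3⟩
        · exact (gen1 _ f1).symm
        · exact gen1 _ f3
      -- transported Möbius data at the three reference points
      have hIx := hAll (k - 1) (by omega)
      rw [hlk1] at hIx
      have hIy := hAll k (by omega)
      rw [hlk] at hIy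
      have hIz := hAll e hem
      rw [← hd₀e] at hIz
      -- the two cross-ratio equations across the ear
      have hu := eq1 _ hear k d₀ hquad
      have hu' := eq2 _ hear k d₀ hquad
      simp only at hu hu'
      rw [hIx.2, hIy.2, hIz.2] at hu'
      have hstep := moeb_step hdet hIx.1 hIy.1 hIz.1 (hX _ hear) hxy hyz hxz hu hu'
      intro i hi
      by_cases hik : i = k
      · rw [hik]
        exact hstep
      · have hri : rho k i < m - 1 := by unfold rho; split_ifs <;> omega
        have := hAll (rho k i) hri
        rwa [lft_rho hik] at this

/-- Given an ideal triangulation `T` of the `(n+3)`-gon and nonzero complex numbers `X_j`,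
one for each diagonal `j` of `T`, there exists a configuration `ψ` of points of `ℂP¹`
(here normalized to lie in `ℂ`), generic with respect to `T` and unique up to the diagonal
Möbius (`PGL₂(ℂ)`) action, whose cross-ratio across each diagonal `j` of `T` equals `X_j`. -/
theorem stmt_9 (n : ℕ) (T : Finset (ℕ × ℕ)) (hT : IsTriangulation (n + 3) T)
    (X : ℕ × ℕ → ℂ) (hX : ∀ p ∈ T, X p ≠ 0) :
    (∃ ψ : ℕ → ℂ,
      (∀ p : ℕ × ℕ, IsEdge (n + 3) T p → ψ p.1 ≠ ψ p.2) ∧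
      ∀ p ∈ T, ∀ b d : ℕ, Quad (n + 3) T p b d →
        crossRatio (ψ p.1) (ψ b) (ψ p.2) (ψ d) = X p) ∧
    (∀ ψ ψ' : ℕ → ℂ,
      ((∀ p : ℕ × ℕ, IsEdge (n + 3) T p → ψ p.1 ≠ ψ p.2) ∧
        ∀ p ∈ T, ∀ b d : ℕ, Quad (n + 3) T p b d →
          crossRatio (ψ p.1) (ψ b) (ψ p.2) (ψ d) = X p) →
      ((∀ p : ℕ × ℕ, IsEdge (n + 3) T p → ψ' p.1 ≠ ψ' p.2) ∧
        ∀ p ∈ T, ∀ b d : ℕ, Quad (n + 3) T p b d →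
          crossRatio (ψ' p.1) (ψ' b) (ψ' p.2) (ψ' d) = X p) →
      ∃ a b c d : ℂ, a * d - b * c ≠ 0 ∧
        ∀ i < n + 3, c * ψ i + d ≠ 0 ∧ ψ' i = (a * ψ i + b) / (c * ψ i + d)) := by
  constructor
  · exact exist_sol (n + 3) (by omega) T hT X hX
  · intro ψ ψ' h1 h2
    exact uniq_sol (n + 3) (by omega) T hT X hX ψ ψ' h1 h2
end

section
/- If every triangle of an ideal triangulation T of the (n+3)-gon contains at least one boundary side, then the quiver Q(T) is an orientation of the Aₙ Dynkin diagram: its underlying graph is a path on n vertices. -/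
/-- Adjacency in the underlying graph of the quiver `Q(T)`: two distinct diagonals are
adjacent iff some triangle of `T` contains both among its sides. -/
def QAdj (m : ℕ) (T : Finset (ℕ × ℕ)) (p q : ℕ × ℕ) : Prop :=
  p ≠ q ∧ ∃ a b c : ℕ, IsTri m T a b c ∧
    p ∈ ({(a, b), (b, c), (a, c)} : Set (ℕ × ℕ)) ∧
    q ∈ ({(a, b), (b, c), (a, c)} : Set (ℕ × ℕ))

lemma compress (m : ℕ) (S : Finset (ℕ × ℕ)) (d : ℕ × ℕ)
    (hdiag : ∀ p ∈ S, IsDiag m p) (hcross : ∀ p ∈ S, ∀ q ∈ S, ¬Cross p q)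
    (hd : d ∈ S) (hmin : ∀ q ∈ S, d.2 - d.1 ≤ q.2 - q.1) :
    ∃ S' : Finset (ℕ × ℕ), (∀ p ∈ S', IsDiag (m - (d.2 - d.1) + 1) p) ∧
      (∀ p ∈ S', ∀ q ∈ S', ¬Cross p q) ∧ S'.card + 1 = S.card := by
  obtain ⟨a, b⟩ := d
  obtain ⟨hab, hbm, hne⟩ := hdiag _ hd
  simp only at hab hbm hne hmin ⊢
  set ψ : ℕ → ℕ := fun x => if x ≤ a then x else x - (b - a - 1) with hψ
  have avoid : ∀ q ∈ S.erase (a,b), (q.1 ≤ a ∨ b ≤ q.1) ∧ (q.2 ≤ a ∨ b ≤ q.2) ∧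
      (q.1 ≤ a → b ≤ q.2 → q.1 + (b - a) < q.2) := by
    intro q hq
    have hqS := Finset.mem_of_mem_erase hq
    have hqd : ¬(q.1 = a ∧ q.2 = b) := by
      have := Finset.ne_of_mem_erase hq
      intro h; exact this (Prod.ext_iff.mpr ⟨h.1, h.2⟩)
    obtain ⟨h1a, h1b, h1c⟩ := hdiag q hqS
    have h2 := hcross _ hd q hqS
    have h3 := hcross q hqS _ hd
    have h4 := hmin q hqS
    unfold Cross at h2 h3
    simp only at *
    omega
  have psilt : ∀ x y : ℕ, (x ≤ a ∨ b ≤ x) → (y ≤ a ∨ b ≤ y) → (ψ x < ψ y ↔ x < y) := by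
    intro x y hx hy; simp only [hψ]; split_ifs <;> omega
  have psieq : ∀ x y : ℕ, (x ≤ a ∨ b ≤ x) → (y ≤ a ∨ b ≤ y) → (ψ x = ψ y ↔ x = y) := by
    intro x y hx hy; simp only [hψ]; split_ifs <;> omega
  refine ⟨(S.erase (a,b)).image (fun q => (ψ q.1, ψ q.2)), ?_, ?_, ?_⟩
  · rintro p hp
    simp only [Finset.mem_image] at hp
    obtain ⟨q, hq, rfl⟩ := hp
    obtain ⟨hv1, hv2, hv3⟩ := avoid q hq
    have hqS := Finset.mem_of_mem_erase hq
    obtain ⟨h1a, h1b, h1c⟩ := hdiag q hqS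
    refine ⟨?_, ?_, ?_⟩ <;> simp only [hψ] <;> split_ifs <;> omega
  · rintro p hp q hq
    simp only [Finset.mem_image] at hp hq
    obtain ⟨p', hp', rfl⟩ := hp
    obtain ⟨q', hq', rfl⟩ := hq
    have hnc := hcross p' (Finset.mem_of_mem_erase hp') q' (Finset.mem_of_mem_erase hq')
    obtain ⟨ha1, ha2, -⟩ := avoid p' hp'
    obtain ⟨hb1, hb2, -⟩ := avoid q' hq'
    unfold Cross at hnc ⊢
    simp only at *
    rw [psilt _ _ ha1 hb1, psilt _ _ hb1 ha2, psilt _ _ ha2 hb2,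
        psilt _ _ hb1 ha1, psilt _ _ ha1 hb2, psilt _ _ hb2 ha2]
    exact hnc
  · rw [Finset.card_image_of_injOn, Finset.card_erase_of_mem hd]
    · have : S.card ≠ 0 := Finset.card_ne_zero_of_mem hd
      omega
    · intro p hp q hq hpq
      obtain ⟨ha1, ha2, -⟩ := avoid p hp
      obtain ⟨hb1, hb2, -⟩ := avoid q hq
      simp only [Prod.ext_iff] at hpq ⊢
      rw [psieq _ _ ha1 hb1, psieq _ _ ha2 hb2] at hpq
      exact hpq

lemma card_noncross : ∀ m : ℕ, ∀ S : Finset (ℕ × ℕ), (∀ p ∈ S, IsDiag m p) →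
    (∀ p ∈ S, ∀ q ∈ S, ¬Cross p q) → S.card ≤ m - 3 := by
  intro m
  induction m using Nat.strong_induction_on with
  | _ m IH =>
    intro S hdiag hcross
    rcases S.eq_empty_or_nonempty with rfl | hne
    · simp
    · obtain ⟨d, hd, hmin⟩ := S.exists_min_image (fun p => p.2 - p.1) hne
      obtain ⟨h1, h2, h3⟩ := hdiag d hd
      obtain ⟨S', hS1, hS2, hS3⟩ := compress m S d hdiag hcross hd hmin
      have hlt : m - (d.2 - d.1) + 1 < m := by omega
      have := IH _ hlt S' hS1 hS2
      omega

lemma card_noncross_min (m : ℕ) (S : Finset (ℕ × ℕ)) (hdiag : ∀ p ∈ S, IsDiag m p)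
    (hcross : ∀ p ∈ S, ∀ q ∈ S, ¬Cross p q) (d : ℕ × ℕ) (hd : d ∈ S)
    (hmin : ∀ q ∈ S, d.2 - d.1 ≤ q.2 - q.1) : S.card + (d.2 - d.1) + 1 ≤ m := by
  obtain ⟨h1, h2, h3⟩ := hdiag d hd
  obtain ⟨S', hS1, hS2, hS3⟩ := compress m S d hdiag hcross hd hmin
  have := card_noncross _ S' hS1 hS2
  omega

lemma exists_ear (m : ℕ) (T : Finset (ℕ × ℕ)) (hT : IsTriangulation m T) (hm : 4 ≤ m) :
    ∃ a, (a, a + 2) ∈ T := by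
  obtain ⟨hdiag, hcross, hcard⟩ := hT
  have hne : T.Nonempty := by rw [← Finset.card_pos, hcard]; omega
  obtain ⟨d, hd, hmin⟩ := T.exists_min_image (fun p => p.2 - p.1) hne
  have hb := card_noncross_min m T hdiag hcross d hd hmin
  obtain ⟨h1, h2, h3⟩ := hdiag d hd
  have hs : d.2 = d.1 + 2 := by omega
  refine ⟨d.1, ?_⟩
  have : d = (d.1, d.1 + 2) := Prod.ext_iff.mpr ⟨rfl, hs⟩
  rwa [← this]

lemma card_noncross_shift (k x : ℕ) (S : Finset (ℕ × ℕ)) (hk : 3 ≤ k)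
    (h1 : ∀ p ∈ S, x ≤ p.1 ∧ p.1 + 1 < p.2 ∧ p.2 ≤ x + k - 1 ∧ ¬(p.1 = x ∧ p.2 = x + k - 1))
    (hcross : ∀ p ∈ S, ∀ q ∈ S, ¬Cross p q) : S.card ≤ k - 3 := by
  have hinj : Set.InjOn (fun p : ℕ × ℕ => (p.1 - x, p.2 - x)) S := by
    intro p hp q hq hpq
    have hp1 := h1 p hp
    have hq1 := h1 q hq
    simp only [Prod.ext_iff] at hpq ⊢
    omega
  have := card_noncross k (S.image (fun p => (p.1 - x, p.2 - x))) ?_ ?_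
  · rwa [Finset.card_image_of_injOn hinj] at this
  · rintro p hp
    simp only [Finset.mem_image] at hp
    obtain ⟨q, hq, rfl⟩ := hp
    have := h1 q hq
    refine ⟨by omega, by omega, by omega⟩
  · rintro p hp q hq
    simp only [Finset.mem_image] at hp hq
    obtain ⟨p', hp', rfl⟩ := hp
    obtain ⟨q', hq', rfl⟩ := hq
    have hnc := hcross p' hp' q' hq'
    have := h1 p' hp'
    have := h1 q' hq'
    unfold Cross at hnc ⊢
    simp only at *
    omega

set_option maxHeartbeats 2000000 in
lemma exists_fan (m : ℕ) (T : Finset (ℕ × ℕ)) (hT : IsTriangulation m T) (hm : 4 ≤ m) :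
    ∃ x, 0 < x ∧ x < m - 1 ∧ IsEdge m T (0, x) ∧ IsEdge m T (x, m - 1) := by
  obtain ⟨hdiag, hcross, hcard⟩ := hT
  have hXne : (insert 1 ((T.filter (fun p => p.1 = 0)).image Prod.snd)).Nonempty :=
    Finset.insert_nonempty _ _
  obtain ⟨x, hxmem', hxmax'⟩ :=
    Finset.exists_max_image _ id hXne
  simp only [id] at hxmax'
  have hx1 : 1 ≤ x := hxmax' 1 (Finset.mem_insert_self _ _)
  have hxmem : x = 1 ∨ (0, x) ∈ T := by
    rcases Finset.mem_insert.mp hxmem' with h | h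
    · exact Or.inl h
    · right
      simp only [Finset.mem_image, Finset.mem_filter] at h
      obtain ⟨p, ⟨hp, hp0⟩, hp2⟩ := h
      have : p = (0, x) := Prod.ext_iff.mpr ⟨hp0, hp2⟩
      rwa [← this]
  have hmax : ∀ t, (0, t) ∈ T → t ≤ x := by
    intro t ht
    exact hxmax' t (Finset.mem_insert_of_mem
      (Finset.mem_image.mpr ⟨(0, t), Finset.mem_filter.mpr ⟨ht, rfl⟩, rfl⟩))
  have hxm : x ≤ m - 2 := by
    rcases hxmem with h | h
    · omega
    · obtain ⟨h1, h2, h3⟩ := hdiag _ h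
      simp only [true_and] at h3
      omega
  have hedge0 : IsEdge m T (0, x) := by
    rcases hxmem with h | h
    · exact Or.inr (Or.inl ⟨by simp only; omega, by simp only; omega⟩)
    · exact Or.inl h
  by_cases hxtop : x = m - 2
  · exact ⟨x, by omega, by omega, hedge0,
      Or.inr (Or.inl ⟨by simp only; omega, by simp only; omega⟩)⟩
  by_cases hxT : (x, m - 1) ∈ T
  · exact ⟨x, by omega, by omega, hedge0, Or.inl hxT⟩
  exfalso
  have hxm3 : x ≤ m - 3 := by omega
  have hsub : T ⊆ T.filter (fun p => p.2 ≤ x) ∪ T.filter (fun p => x ≤ p.1) := by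
    intro p hp
    have key : p.2 ≤ x ∨ x ≤ p.1 := by
      obtain ⟨h1, h2, h3⟩ := hdiag p hp
      rcases Nat.eq_zero_or_pos p.1 with h0 | h0
      · have : p = (0, p.2) := Prod.ext_iff.mpr ⟨h0, rfl⟩
        have := hmax p.2 (by rwa [← this])
        omega
      · rcases hxmem with h | h
        · omega
        · have hnc := hcross _ h p hp
          unfold Cross at hnc
          simp only at hnc
          omega
    rw [Finset.mem_union, Finset.mem_filter, Finset.mem_filter]
    tauto
  have hcardsum : T.card ≤ (T.filter (fun p => p.2 ≤ x)).card + (T.filter (fun p => x ≤ p.1)).card :=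
    le_trans (Finset.card_le_card hsub) (Finset.card_union_le _ _)
  have hhigh : (T.filter (fun p => x ≤ p.1)).card ≤ (m - x) - 3 := by
    apply card_noncross_shift (m - x) x _ (by omega)
    · intro p hp
      rw [Finset.mem_filter] at hp
      obtain ⟨h1, h2, h3⟩ := hdiag p hp.1
      have hne : ¬(p.1 = x ∧ p.2 = m - 1) := by
        intro h
        have : p = (x, m - 1) := Prod.ext_iff.mpr h
        exact hxT (this ▸ hp.1)
      refine ⟨hp.2, by omega, by omega, by omega⟩
    · intro p hp q hq
      rw [Finset.mem_filter] at hp hq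
      exact hcross p hp.1 q hq.1
  have hlow : (T.filter (fun p => p.2 ≤ x)).card ≤ x - 1 := by
    rcases hxmem with h | h
    · have : T.filter (fun p => p.2 ≤ x) = ∅ := by
        rw [Finset.eq_empty_iff_forall_notMem]
        intro p hp
        rw [Finset.mem_filter] at hp
        obtain ⟨h1, h2, h3⟩ := hdiag p hp.1
        omega
      rw [this]; simp
    · have hx2 : 2 ≤ x := by
        obtain ⟨h1, h2, h3⟩ := hdiag _ h
        simp only at h1 h2 h3
        omega
      have hmem : (0, x) ∈ T.filter (fun p => p.2 ≤ x) :=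
        Finset.mem_filter.mpr ⟨h, le_refl x⟩
      have herase : ((T.filter (fun p => p.2 ≤ x)).erase (0, x)).card ≤ (x + 1) - 3 := by
        apply card_noncross_shift (x + 1) 0 _ (by omega)
        · intro p hp
          have hpT := Finset.mem_of_mem_erase hp
          rw [Finset.mem_filter] at hpT
          obtain ⟨h1, h2, h3⟩ := hdiag p hpT.1
          have hne0 : ¬(p.1 = 0 ∧ p.2 = x) := by
            intro hc; exact Finset.ne_of_mem_erase hp (Prod.ext_iff.mpr hc)
          have := hpT.2
          refine ⟨by omega, by omega, by omega, by omega⟩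
        · intro p hp q hq
          exact hcross p (Finset.mem_filter.mp (Finset.mem_of_mem_erase hp)).1
            q (Finset.mem_filter.mp (Finset.mem_of_mem_erase hq)).1
      have := Finset.card_erase_of_mem hmem
      omega
  omega

def rot (m : ℕ) (p : ℕ × ℕ) : ℕ × ℕ :=
  if p.2 = m - 1 then (0, p.1 + 1) else (p.1 + 1, p.2 + 1)

def rotInv (m : ℕ) (p : ℕ × ℕ) : ℕ × ℕ :=
  if p.1 = 0 then (p.2 - 1, m - 1) else (p.1 - 1, p.2 - 1)

lemma rotInv_rot (m : ℕ) (p : ℕ × ℕ) (h : p.2 < m) : rotInv m (rot m p) = p := by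
  obtain ⟨a, b⟩ := p
  simp only [rot, rotInv] at *
  split_ifs with h1 h2 h3 <;> simp_all <;> omega

lemma rot_diag (m : ℕ) (p : ℕ × ℕ) (h : IsDiag m p) : IsDiag m (rot m p) := by
  obtain ⟨a, b⟩ := p
  obtain ⟨h1, h2, h3⟩ := h
  simp only at h1 h2 h3
  unfold IsDiag rot
  split_ifs with hb <;> simp only [eq_self_iff_true, true_and, and_true, false_and, not_false_eq_true] at hb ⊢ <;> omega

lemma rot_side (m : ℕ) (p : ℕ × ℕ) (h : IsSide m p) : IsSide m (rot m p) := by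
  obtain ⟨a, b⟩ := p
  unfold IsSide at h
  simp only at h
  unfold IsSide rot
  split_ifs with hb <;> simp only [eq_self_iff_true, true_and, and_true] at hb ⊢ <;> omega

lemma edge_ub (m : ℕ) (T : Finset (ℕ × ℕ)) (hdiag : ∀ p ∈ T, IsDiag m p)
    (e : ℕ × ℕ) (he : IsEdge m T e) : e.1 < e.2 ∧ e.2 < m := by
  rcases he with h | h
  · obtain ⟨h1, h2, h3⟩ := hdiag e h
    omega
  · unfold IsSide at h
    omega

lemma edge_rot (m : ℕ) (T : Finset (ℕ × ℕ)) (e : ℕ × ℕ) (he : IsEdge m T e) :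
    IsEdge m (T.image (rot m)) (rot m e) := by
  rcases he with h | h
  · exact Or.inl (Finset.mem_image_of_mem _ h)
  · exact Or.inr (rot_side m e h)

lemma rotInv_side (m : ℕ) (e : ℕ × ℕ) (h : IsSide m e) : IsSide m (rotInv m e) := by
  obtain ⟨a, b⟩ := e
  unfold IsSide at h
  simp only at h
  unfold IsSide rotInv
  split_ifs with hb <;> simp only [eq_self_iff_true, true_and, and_true] at hb ⊢ <;> omega

lemma edge_rot_inv (m : ℕ) (T : Finset (ℕ × ℕ)) (hdiag : ∀ p ∈ T, IsDiag m p)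
    (e : ℕ × ℕ) (he : IsEdge m (T.image (rot m)) e) : IsEdge m T (rotInv m e) := by
  rcases he with h | h
  · rw [Finset.mem_image] at h
    obtain ⟨p, hp, rfl⟩ := h
    have := (hdiag p hp).2.1
    rw [rotInv_rot m p this]
    exact Or.inl hp
  · exact Or.inr (rotInv_side m e h)

lemma rot_noncross (m : ℕ) (p q : ℕ × ℕ) (hp : IsDiag m p) (hq : IsDiag m q)
    (h : ¬Cross p q) : ¬Cross (rot m p) (rot m q) := by
  obtain ⟨a, b⟩ := p
  obtain ⟨c, d⟩ := q
  obtain ⟨h1, h2, h3⟩ := hp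
  obtain ⟨h4, h5, h6⟩ := hq
  simp only at h1 h2 h3 h4 h5 h6
  unfold Cross at h ⊢
  unfold rot
  split_ifs with hb hd hd <;> simp only at * <;> omega

lemma tri_rot (m : ℕ) (T : Finset (ℕ × ℕ)) (hdiag : ∀ p ∈ T, IsDiag m p)
    (a b c : ℕ) (h : IsTri m T a b c) :
    ∃ a' b' c', IsTri m (T.image (rot m)) a' b' c' ∧
      ({((a' : ℕ), (b' : ℕ)), (b', c'), (a', c')} : Set (ℕ × ℕ)) =
        rot m '' {(a, b), (b, c), (a, c)} := by
  obtain ⟨hab, hbc, e1, e2, e3⟩ := h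
  have hbm : c < m := (edge_ub m T hdiag _ e2).2
  by_cases hc : c = m - 1
  · refine ⟨0, a + 1, b + 1, ⟨by omega, by omega, ?_, ?_, ?_⟩, ?_⟩
    · have := edge_rot m T _ e3
      rwa [show rot m (a, c) = (0, a + 1) by unfold rot; simp only; rw [if_pos hc]] at this
    · have := edge_rot m T _ e1
      rwa [show rot m (a, b) = (a + 1, b + 1) by unfold rot; simp only; rw [if_neg (by omega)]] at this
    · have := edge_rot m T _ e2
      rwa [show rot m (b, c) = (0, b + 1) by unfold rot; simp only; rw [if_pos hc]] at this
    · rw [show rot m '' {(a, b), (b, c), (a, c)} =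
          {rot m (a, b), rot m (b, c), rot m (a, c)} by simp [Set.image_insert_eq]]
      rw [show rot m (a, b) = (a + 1, b + 1) by unfold rot; simp only; rw [if_neg (by omega)],
          show rot m (b, c) = (0, b + 1) by unfold rot; simp only; rw [if_pos hc],
          show rot m (a, c) = (0, a + 1) by unfold rot; simp only; rw [if_pos hc]]
      ext x
      simp only [Set.mem_insert_iff, Set.mem_singleton_iff]
      tauto
  · refine ⟨a + 1, b + 1, c + 1, ⟨by omega, by omega, ?_, ?_, ?_⟩, ?_⟩
    · have := edge_rot m T _ e1
      rwa [show rot m (a, b) = (a + 1, b + 1) by unfold rot; simp only; rw [if_neg (by omega)]] at this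
    · have := edge_rot m T _ e2
      rwa [show rot m (b, c) = (b + 1, c + 1) by unfold rot; simp only; rw [if_neg (by omega)]] at this
    · have := edge_rot m T _ e3
      rwa [show rot m (a, c) = (a + 1, c + 1) by unfold rot; simp only; rw [if_neg (by omega)]] at this
    · rw [show rot m '' {(a, b), (b, c), (a, c)} =
          {rot m (a, b), rot m (b, c), rot m (a, c)} by simp [Set.image_insert_eq]]
      rw [show rot m (a, b) = (a + 1, b + 1) by unfold rot; simp only; rw [if_neg (by omega)],
          show rot m (b, c) = (b + 1, c + 1) by unfold rot; simp only; rw [if_neg (by omega)],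
          show rot m (a, c) = (a + 1, c + 1) by unfold rot; simp only; rw [if_neg (by omega)]]

lemma tri_rot_inv (m : ℕ) (T : Finset (ℕ × ℕ)) (hdiag : ∀ p ∈ T, IsDiag m p)
    (a b c : ℕ) (h : IsTri m (T.image (rot m)) a b c) :
    ∃ a' b' c', IsTri m T a' b' c' ∧
      ({((a' : ℕ), (b' : ℕ)), (b', c'), (a', c')} : Set (ℕ × ℕ)) =
        rotInv m '' {(a, b), (b, c), (a, c)} := by
  have hdiag' : ∀ p ∈ T.image (rot m), IsDiag m p := by
    intro p hp
    rw [Finset.mem_image] at hp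
    obtain ⟨q, hq, rfl⟩ := hp
    exact rot_diag m q (hdiag q hq)
  obtain ⟨hab, hbc, e1, e2, e3⟩ := h
  have hcm : c < m := (edge_ub m _ hdiag' _ e2).2
  have f1 := edge_rot_inv m T hdiag _ e1
  have f2 := edge_rot_inv m T hdiag _ e2
  have f3 := edge_rot_inv m T hdiag _ e3
  by_cases ha : a = 0
  · subst ha
    refine ⟨b - 1, c - 1, m - 1, ⟨by omega, by omega, ?_, ?_, ?_⟩, ?_⟩
    · rwa [show rotInv m (b, c) = (b - 1, c - 1) by unfold rotInv; simp only; rw [if_neg (by omega)]] at f2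
    · rwa [show rotInv m (0, c) = (c - 1, m - 1) by unfold rotInv; simp] at f3
    · rwa [show rotInv m (0, b) = (b - 1, m - 1) by unfold rotInv; simp] at f1
    · rw [show rotInv m '' {((0:ℕ), b), (b, c), (0, c)} =
          {rotInv m (0, b), rotInv m (b, c), rotInv m (0, c)} by simp [Set.image_insert_eq]]
      rw [show rotInv m (b, c) = (b - 1, c - 1) by unfold rotInv; simp only; rw [if_neg (by omega)],
          show rotInv m (0, c) = (c - 1, m - 1) by unfold rotInv; simp,
          show rotInv m (0, b) = (b - 1, m - 1) by unfold rotInv; simp]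
      ext x
      simp only [Set.mem_insert_iff, Set.mem_singleton_iff]
      tauto
  · refine ⟨a - 1, b - 1, c - 1, ⟨by omega, by omega, ?_, ?_, ?_⟩, ?_⟩
    · rwa [show rotInv m (a, b) = (a - 1, b - 1) by unfold rotInv; simp only; rw [if_neg ha]] at f1
    · rwa [show rotInv m (b, c) = (b - 1, c - 1) by unfold rotInv; simp only; rw [if_neg (by omega)]] at f2
    · rwa [show rotInv m (a, c) = (a - 1, c - 1) by unfold rotInv; simp only; rw [if_neg ha]] at f3
    · rw [show rotInv m '' {(a, b), (b, c), (a, c)} =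
          {rotInv m (a, b), rotInv m (b, c), rotInv m (a, c)} by simp [Set.image_insert_eq]]
      rw [show rotInv m (a, b) = (a - 1, b - 1) by unfold rotInv; simp only; rw [if_neg ha],
          show rotInv m (b, c) = (b - 1, c - 1) by unfold rotInv; simp only; rw [if_neg (by omega)],
          show rotInv m (a, c) = (a - 1, c - 1) by unfold rotInv; simp only; rw [if_neg ha]]

lemma qadj_rot (m : ℕ) (T : Finset (ℕ × ℕ)) (hdiag : ∀ p ∈ T, IsDiag m p)
    (p q : ℕ × ℕ) (hp : p ∈ T) (hq : q ∈ T) :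
    QAdj m T p q ↔ QAdj m (T.image (rot m)) (rot m p) (rot m q) := by
  have hpm : p.2 < m := (hdiag p hp).2.1
  have hqm : q.2 < m := (hdiag q hq).2.1
  constructor
  · rintro ⟨hne, a, b, c, htri, hps, hqs⟩
    obtain ⟨a', b', c', htri', hset⟩ := tri_rot m T hdiag a b c htri
    refine ⟨?_, a', b', c', htri', ?_, ?_⟩
    · intro hc
      apply hne
      have := congrArg (rotInv m) hc
      rwa [rotInv_rot m p hpm, rotInv_rot m q hqm] at this
    · rw [hset]; exact Set.mem_image_of_mem _ hps
    · rw [hset]; exact Set.mem_image_of_mem _ hqs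
  · rintro ⟨hne, a, b, c, htri, hps, hqs⟩
    obtain ⟨a', b', c', htri', hset⟩ := tri_rot_inv m T hdiag a b c htri
    refine ⟨fun hc => hne (by rw [hc]), a', b', c', htri', ?_, ?_⟩
    · rw [hset]
      exact ⟨rot m p, hps, rotInv_rot m p hpm⟩
    · rw [hset]
      exact ⟨rot m q, hqs, rotInv_rot m q hqm⟩

lemma triangulation_rot (m : ℕ) (T : Finset (ℕ × ℕ)) (hT : IsTriangulation m T) :
    IsTriangulation m (T.image (rot m)) := by
  obtain ⟨hdiag, hcross, hcard⟩ := hT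
  refine ⟨?_, ?_, ?_⟩
  · intro p hp
    rw [Finset.mem_image] at hp
    obtain ⟨q, hq, rfl⟩ := hp
    exact rot_diag m q (hdiag q hq)
  · intro p hp q hq
    rw [Finset.mem_image] at hp hq
    obtain ⟨p', hp', rfl⟩ := hp
    obtain ⟨q', hq', rfl⟩ := hq
    exact rot_noncross m p' q' (hdiag p' hp') (hdiag q' hq') (hcross p' hp' q' hq')
  · rw [Finset.card_image_of_injOn, hcard]
    intro p hp q hq hpq
    have := congrArg (rotInv m) hpq
    rwa [rotInv_rot m p (hdiag p hp).2.1, rotInv_rot m q (hdiag q hq).2.1] at this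

lemma noint_rot (m : ℕ) (T : Finset (ℕ × ℕ)) (hdiag : ∀ p ∈ T, IsDiag m p)
    (hnoint : ∀ a b c : ℕ, IsTri m T a b c → ¬((a, b) ∈ T ∧ (b, c) ∈ T ∧ (a, c) ∈ T)) :
    ∀ a b c : ℕ, IsTri m (T.image (rot m)) a b c →
      ¬((a, b) ∈ T.image (rot m) ∧ (b, c) ∈ T.image (rot m) ∧ (a, c) ∈ T.image (rot m)) := by
  intro a b c htri ⟨m1, m2, m3⟩
  obtain ⟨a', b', c', htri', hset⟩ := tri_rot_inv m T hdiag a b c htri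
  have pull : ∀ e : ℕ × ℕ, e ∈ T.image (rot m) → rotInv m e ∈ T := by
    intro e he
    rw [Finset.mem_image] at he
    obtain ⟨p, hpT, rfl⟩ := he
    rwa [rotInv_rot m p (hdiag p hpT).2.1]
  apply hnoint a' b' c' htri'
  have key : ∀ x : ℕ × ℕ, x ∈ ({((a' : ℕ), (b' : ℕ)), (b', c'), (a', c')} : Set (ℕ × ℕ)) → x ∈ T := by
    intro x hx
    rw [hset] at hx
    obtain ⟨e, he, rfl⟩ := hx
    rcases he with rfl | rfl | rfl
    · exact pull _ m1
    · exact pull _ m2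
    · exact pull _ m3
  exact ⟨key _ (by simp), key _ (by simp), key _ (by simp)⟩

lemma qadj_symm (m : ℕ) (T : Finset (ℕ × ℕ)) (p q : ℕ × ℕ) (h : QAdj m T p q) :
    QAdj m T q p := by
  obtain ⟨hne, a, b, c, htri, hp, hq⟩ := h
  exact ⟨fun hc => hne hc.symm, a, b, c, htri, hq, hp⟩

lemma qadj_cases (k : ℕ) (T : Finset (ℕ × ℕ))
    (hnoint : ∀ a b c : ℕ, IsTri k T a b c → ¬((a, b) ∈ T ∧ (b, c) ∈ T ∧ (a, c) ∈ T))
    (p q : ℕ × ℕ) (hp : p ∈ T) (hq : q ∈ T) (h : QAdj k T p q) :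
    ∃ a b c : ℕ, IsTri k T a b c ∧
      ((p = (a, b) ∧ q = (b, c) ∧ IsSide k (a, c)) ∨ (p = (b, c) ∧ q = (a, b) ∧ IsSide k (a, c)) ∨
       (p = (a, b) ∧ q = (a, c) ∧ IsSide k (b, c)) ∨ (p = (a, c) ∧ q = (a, b) ∧ IsSide k (b, c)) ∨
       (p = (b, c) ∧ q = (a, c) ∧ IsSide k (a, b)) ∨ (p = (a, c) ∧ q = (b, c) ∧ IsSide k (a, b))) := by
  obtain ⟨hne, a, b, c, htri, hps, hqs⟩ := h
  refine ⟨a, b, c, htri, ?_⟩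
  obtain ⟨hab, hbc, e1, e2, e3⟩ := htri
  have s1 : (a, b) ∈ T ∨ IsSide k (a, b) := e1
  have s2 : (b, c) ∈ T ∨ IsSide k (b, c) := e2
  have s3 : (a, c) ∈ T ∨ IsSide k (a, c) := e3
  have noint := hnoint a b c ⟨hab, hbc, e1, e2, e3⟩
  simp only [Set.mem_insert_iff, Set.mem_singleton_iff] at hps hqs
  rcases hps with rfl | rfl | rfl <;> rcases hqs with h2 | h2 | h2
  · exact absurd h2.symm hne
  · refine Or.inl ⟨rfl, h2, ?_⟩
    rcases s3 with h3 | h3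
    · exact absurd ⟨hp, h2 ▸ hq, h3⟩ noint
    · exact h3
  · refine Or.inr (Or.inr (Or.inl ⟨rfl, h2, ?_⟩))
    rcases s2 with h3 | h3
    · exact absurd ⟨hp, h3, h2 ▸ hq⟩ noint
    · exact h3
  · refine Or.inr (Or.inl ⟨rfl, h2, ?_⟩)
    rcases s3 with h3 | h3
    · exact absurd ⟨h2 ▸ hq, hp, h3⟩ noint
    · exact h3
  · exact absurd h2.symm hne
  · refine Or.inr (Or.inr (Or.inr (Or.inr (Or.inl ⟨rfl, h2, ?_⟩))))
    rcases s1 with h3 | h3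
    · exact absurd ⟨h3, hp, h2 ▸ hq⟩ noint
    · exact h3
  · refine Or.inr (Or.inr (Or.inr (Or.inl ⟨rfl, h2, ?_⟩)))
    rcases s2 with h3 | h3
    · exact absurd ⟨h2 ▸ hq, h3, hp⟩ noint
    · exact h3
  · refine Or.inr (Or.inr (Or.inr (Or.inr (Or.inr ⟨rfl, h2, ?_⟩))))
    rcases s1 with h3 | h3
    · exact absurd ⟨h3, h2 ▸ hq, hp⟩ noint
    · exact h3
  · exact absurd h2.symm hne

def Good (m n : ℕ) (T : Finset (ℕ × ℕ)) : Prop :=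
  ∃ f : Fin n → ℕ × ℕ, Function.Injective f ∧ (∀ i, f i ∈ T) ∧
    (∀ p ∈ T, ∃ i, f i = p) ∧
    ∀ i j : Fin n, QAdj m T (f i) (f j) ↔ ((i : ℕ) + 1 = j ∨ (j : ℕ) + 1 = i)

lemma good_rot (m n : ℕ) (T : Finset (ℕ × ℕ)) (hdiag : ∀ p ∈ T, IsDiag m p)
    (h : Good m n (T.image (rot m))) : Good m n T := by
  obtain ⟨f, hinj, hmem, hsurj, hadj⟩ := h
  have hpre : ∀ i, ∃ p, p ∈ T ∧ rot m p = f i := by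
    intro i
    have := hmem i
    rw [Finset.mem_image] at this
    obtain ⟨p, hp, hp2⟩ := this
    exact ⟨p, hp, hp2⟩
  choose g hg1 hg2 using hpre
  refine ⟨g, ?_, hg1, ?_, ?_⟩
  · intro i j hij
    apply hinj
    rw [← hg2 i, ← hg2 j, hij]
  · intro p hp
    obtain ⟨i, hi⟩ := hsurj (rot m p) (Finset.mem_image_of_mem _ hp)
    refine ⟨i, ?_⟩
    have : rot m (g i) = rot m p := by rw [hg2 i, hi]
    have := congrArg (rotInv m) this
    rwa [rotInv_rot m _ (hdiag _ (hg1 i)).2.1, rotInv_rot m _ (hdiag _ hp).2.1] at this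
  · intro i j
    rw [qadj_rot m T hdiag _ _ (hg1 i) (hg1 j), hg2 i, hg2 j]
    exact hadj i j

lemma good_rot_iter (m n : ℕ) : ∀ (k : ℕ) (T : Finset (ℕ × ℕ)), IsTriangulation m T →
    Good m n ((fun S => Finset.image (rot m) S)^[k] T) → Good m n T := by
  intro k
  induction k with
  | zero => intro T _ h; exact h
  | succ k IH =>
    intro T hT h
    rw [Function.iterate_succ_apply] at h
    exact good_rot m n T hT.1 (IH _ (triangulation_rot m T hT) h)

lemma triangulation_iter (m : ℕ) (k : ℕ) (T : Finset (ℕ × ℕ)) (hT : IsTriangulation m T) :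
    IsTriangulation m ((fun S => Finset.image (rot m) S)^[k] T) := by
  induction k with
  | zero => exact hT
  | succ k IH => rw [Function.iterate_succ_apply']; exact triangulation_rot m _ IH

lemma noint_iter (m : ℕ) (k : ℕ) (T : Finset (ℕ × ℕ)) (hT : IsTriangulation m T)
    (hnoint : ∀ a b c : ℕ, IsTri m T a b c → ¬((a, b) ∈ T ∧ (b, c) ∈ T ∧ (a, c) ∈ T)) :
    ∀ a b c : ℕ, IsTri m ((fun S => Finset.image (rot m) S)^[k] T) a b c →
      ¬((a, b) ∈ (fun S => Finset.image (rot m) S)^[k] T ∧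
        (b, c) ∈ (fun S => Finset.image (rot m) S)^[k] T ∧
        (a, c) ∈ (fun S => Finset.image (rot m) S)^[k] T) := by
  induction k with
  | zero => exact hnoint
  | succ k IH =>
    rw [Function.iterate_succ_apply']
    exact noint_rot m _ (triangulation_iter m k T hT).1 IH

lemma mem_iter (m : ℕ) (a : ℕ) (T : Finset (ℕ × ℕ)) (hmem : (a, a + 2) ∈ T) :
    ∀ t : ℕ, a + 2 + t ≤ m - 1 → (a + t, a + 2 + t) ∈ (fun S => Finset.image (rot m) S)^[t] T := by
  intro t
  induction t with
  | zero => intro _; simpa using hmem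
  | succ t IH =>
    intro ht
    rw [Function.iterate_succ_apply']
    have h1 : (a + t, a + 2 + t) ∈ (fun S => Finset.image (rot m) S)^[t] T := IH (by omega)
    have h2 : rot m (a + t, a + 2 + t) = (a + t + 1, a + 2 + t + 1) := by
      unfold rot; simp only; rw [if_neg (by omega)]
    have := Finset.mem_image_of_mem (rot m) h1
    rw [h2] at this
    have e : ((a + t + 1 : ℕ), (a + 2 + t + 1 : ℕ)) = (a + (t + 1), a + 2 + (t + 1)) :=
      Prod.ext_iff.mpr ⟨by omega, by omega⟩
    rwa [e] at this

lemma mem_rot_top (m : ℕ) (T : Finset (ℕ × ℕ)) (hm : 4 ≤ m) (hmem : (m - 3, m - 1) ∈ T) :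
    (0, m - 2) ∈ T.image (rot m) := by
  have h2 : rot m (m - 3, m - 1) = (0, m - 2) := by
    unfold rot; simp only; rw [if_pos trivial]
    exact Prod.ext_iff.mpr ⟨rfl, by omega⟩
  have := Finset.mem_image_of_mem (rot m) hmem
  rwa [h2] at this

section Step

variable (n : ℕ) (T1 : Finset (ℕ × ℕ))

lemma haux_snd (hT1 : IsTriangulation (n + 4) T1) (hmem : (0, n + 2) ∈ T1) :
    ∀ e ∈ T1, e.2 ≤ n + 2 := by
  intro e he
  obtain ⟨hdiag, hcross, hcard⟩ := hT1
  obtain ⟨h1, h2, h3⟩ := hdiag e he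
  by_contra hc
  have hx : e.2 = n + 3 := by omega
  have := hcross (0, n + 2) hmem e he
  unfold Cross at this
  simp only at this
  omega

lemma erase_triangulation (hT1 : IsTriangulation (n + 4) T1) (hmem : (0, n + 2) ∈ T1) :
    IsTriangulation (n + 3) (T1.erase (0, n + 2)) := by
  obtain ⟨hdiag, hcross, hcard⟩ := hT1
  refine ⟨?_, ?_, ?_⟩
  · intro p hp
    have hpT := Finset.mem_of_mem_erase hp
    obtain ⟨h1, h2, h3⟩ := hdiag p hpT
    have hne : ¬(p.1 = 0 ∧ p.2 = n + 2) := by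
      intro hc
      exact Finset.ne_of_mem_erase hp (Prod.ext_iff.mpr hc)
    have := haux_snd n T1 ⟨hdiag, hcross, hcard⟩ hmem p hpT
    exact ⟨h1, by omega, by omega⟩
  · intro p hp q hq
    exact hcross p (Finset.mem_of_mem_erase hp) q (Finset.mem_of_mem_erase hq)
  · rw [Finset.card_erase_of_mem hmem, hcard]
    omega

lemma edge_lift (e : ℕ × ℕ) (hmem : (0, n + 2) ∈ T1)
    (he : IsEdge (n + 3) (T1.erase (0, n + 2)) e) : IsEdge (n + 4) T1 e := by
  rcases he with h | h
  · exact Or.inl (Finset.mem_of_mem_erase h)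
  · unfold IsSide at h
    rcases h with ⟨h1, h2⟩ | ⟨h1, h2, h3⟩
    · exact Or.inr (Or.inl ⟨h1, by omega⟩)
    · left
      have : e = (0, n + 2) := Prod.ext_iff.mpr ⟨h1, by omega⟩
      rwa [this]

lemma edge_down_s17 (e : ℕ × ℕ) (he : IsEdge (n + 4) T1 e) (h2 : e.2 ≤ n + 2) :
    IsEdge (n + 3) (T1.erase (0, n + 2)) e := by
  rcases he with h | h
  · by_cases hc : e = (0, n + 2)
    · right; right
      rw [hc]
      exact ⟨rfl, by omega, by omega⟩
    · exact Or.inl (Finset.mem_erase.mpr ⟨hc, h⟩)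
  · unfold IsSide at h
    rcases h with ⟨ha, hb⟩ | ⟨ha, hb, hc⟩
    · exact Or.inr (Or.inl ⟨ha, by omega⟩)
    · omega

lemma tri_lift (a b c : ℕ) (hmem : (0, n + 2) ∈ T1)
    (h : IsTri (n + 3) (T1.erase (0, n + 2)) a b c) : IsTri (n + 4) T1 a b c := by
  obtain ⟨h1, h2, e1, e2, e3⟩ := h
  exact ⟨h1, h2, edge_lift n T1 _ hmem e1, edge_lift n T1 _ hmem e2, edge_lift n T1 _ hmem e3⟩

lemma noint_erase (hT1 : IsTriangulation (n + 4) T1) (hmem : (0, n + 2) ∈ T1)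
    (noint1 : ∀ a b c : ℕ, IsTri (n + 4) T1 a b c →
      ¬((a, b) ∈ T1 ∧ (b, c) ∈ T1 ∧ (a, c) ∈ T1)) :
    ∀ a b c : ℕ, IsTri (n + 3) (T1.erase (0, n + 2)) a b c →
      ¬((a, b) ∈ T1.erase (0, n + 2) ∧ (b, c) ∈ T1.erase (0, n + 2) ∧
        (a, c) ∈ T1.erase (0, n + 2)) := by
  intro a b c htri ⟨m1, m2, m3⟩
  exact noint1 a b c (tri_lift n T1 a b c hmem htri)
    ⟨Finset.mem_of_mem_erase m1, Finset.mem_of_mem_erase m2, Finset.mem_of_mem_erase m3⟩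

lemma qadj_equiv (hT1 : IsTriangulation (n + 4) T1) (hmem : (0, n + 2) ∈ T1)
    (p q : ℕ × ℕ) (hp : p ∈ T1.erase (0, n + 2)) (hq : q ∈ T1.erase (0, n + 2)) :
    QAdj (n + 3) (T1.erase (0, n + 2)) p q ↔ QAdj (n + 4) T1 p q := by
  constructor
  · rintro ⟨hne, a, b, c, htri, hps, hqs⟩
    exact ⟨hne, a, b, c, tri_lift n T1 a b c hmem htri, hps, hqs⟩
  · rintro ⟨hne, a, b, c, htri, hps, hqs⟩
    obtain ⟨hab, hbc, e1, e2, e3⟩ := htri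
    have hcm : c ≤ n + 3 := by
      have := edge_ub (n + 4) T1 hT1.1 _ e2
      omega
    have haux := haux_snd n T1 hT1 hmem
    by_cases hc : c ≤ n + 2
    · refine ⟨hne, a, b, c, ⟨hab, hbc, ?_, ?_, ?_⟩, hps, hqs⟩
      · exact edge_down_s17 n T1 _ e1 (by simp only; omega)
      · exact edge_down_s17 n T1 _ e2 (by simp only; omega)
      · exact edge_down_s17 n T1 _ e3 (by simp only; omega)
    · exfalso
      have hc3 : c = n + 3 := by omega
      subst hc3
      -- edges ending at n+3 must be the sides (n+2, n+3) or (0, n+3)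
      have hedge_end : ∀ x, x < n + 3 → IsEdge (n + 4) T1 (x, n + 3) → x = n + 2 ∨ x = 0 := by
        intro x hx he
        rcases he with h | h
        · have := haux _ h
          simp only at this
          omega
        · unfold IsSide at h
          simp only at h
          omega
      have hb' := hedge_end b hbc e2
      have ha' := hedge_end a (by omega) e3
      have hab' : a = 0 ∧ b = n + 2 := by omega
      obtain ⟨rfl, rfl⟩ := hab'
      -- now p must be one of the three sides, but p ∈ T2
      have hp2 : p.2 ≤ n + 2 := haux p (Finset.mem_of_mem_erase hp)
      have hpne : p ≠ (0, n + 2) := Finset.ne_of_mem_erase hp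
      simp only [Set.mem_insert_iff, Set.mem_singleton_iff] at hps
      rcases hps with rfl | rfl | rfl
      · exact hpne rfl
      · simp only at hp2; omega
      · simp only at hp2; omega

lemma nbr_char (hT1 : IsTriangulation (n + 4) T1) (hmem : (0, n + 2) ∈ T1)
    (noint1 : ∀ a b c : ℕ, IsTri (n + 4) T1 a b c →
      ¬((a, b) ∈ T1 ∧ (b, c) ∈ T1 ∧ (a, c) ∈ T1))
    (q : ℕ × ℕ) (hq : q ∈ T1.erase (0, n + 2))
    (h : QAdj (n + 4) T1 (0, n + 2) q) : q = (1, n + 2) ∨ q = (0, n + 1) := by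
  have hqT := Finset.mem_of_mem_erase hq
  have hq2 : q.2 ≤ n + 2 := haux_snd n T1 hT1 hmem q hqT
  have hqne : q ≠ (0, n + 2) := Finset.ne_of_mem_erase hq
  have hqd := hT1.1 q hqT
  obtain ⟨hd1, hd2, hd3⟩ := hqd
  obtain ⟨a, b, c, htri, hcs⟩ := qadj_cases (n + 4) T1 noint1 _ q hmem hqT h
  obtain ⟨hab, hbc, e1, e2, e3⟩ := htri
  have hcm : c ≤ n + 3 := by
    have := edge_ub (n + 4) T1 hT1.1 _ e2
    omega
  have hqne' : ¬(q.1 = 0 ∧ q.2 = n + 2) := by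
    intro hc; exact hqne (Prod.ext_iff.mpr hc)
  rcases hcs with ⟨h1, h2, h3⟩ | ⟨h1, h2, h3⟩ | ⟨h1, h2, h3⟩ | ⟨h1, h2, h3⟩ | ⟨h1, h2, h3⟩ | ⟨h1, h2, h3⟩ <;>
    rw [Prod.ext_iff] at h1 <;> simp only at h1 <;>
    rw [Prod.ext_iff] at h2 <;> simp only at h2 <;>
    unfold IsSide at h3 <;> simp only at h3
  · -- (0,n+2)=(a,b), q=(b,c), side (a,c)
    exfalso; omega
  · exfalso; omega
  · exfalso; omega
  · -- (0,n+2)=(a,c), q=(a,b), side (b,c) : b = n+1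
    right
    have : q.1 = 0 ∧ q.2 = n + 1 := by omega
    exact Prod.ext_iff.mpr this
  · exfalso; omega
  · -- (0,n+2)=(a,c), q=(b,c), side (a,b) : b = 1
    left
    have : q.1 = 1 ∧ q.2 = n + 2 := by omega
    exact Prod.ext_iff.mpr this

lemma nbr_conv1 (hmem : (0, n + 2) ∈ T1) (h : (1, n + 2) ∈ T1) :
    QAdj (n + 4) T1 (0, n + 2) (1, n + 2) := by
  refine ⟨by simp, 0, 1, n + 2, ⟨by omega, by omega, ?_, Or.inl h, Or.inl hmem⟩, ?_, ?_⟩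
  · exact Or.inr (Or.inl ⟨rfl, by omega⟩)
  · right; right; rfl
  · right; left; rfl

lemma nbr_conv2 (hmem : (0, n + 2) ∈ T1) (h : (0, n + 1) ∈ T1) :
    QAdj (n + 4) T1 (0, n + 2) (0, n + 1) := by
  refine ⟨by simp, 0, n + 1, n + 2, ⟨by omega, by omega, Or.inl h, ?_, Or.inl hmem⟩, ?_, ?_⟩
  · exact Or.inr (Or.inl ⟨rfl, by omega⟩)
  · right; right; rfl
  · left; rfl

end Step

lemma exists_q0 (n : ℕ) (T1 : Finset (ℕ × ℕ)) (hn : 1 ≤ n)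
    (hT1 : IsTriangulation (n + 4) T1) (hmem : (0, n + 2) ∈ T1)
    (noint1 : ∀ a b c : ℕ, IsTri (n + 4) T1 a b c →
      ¬((a, b) ∈ T1 ∧ (b, c) ∈ T1 ∧ (a, c) ∈ T1)) :
    ∃ q0 ∈ T1.erase (0, n + 2), q0 = (1, n + 2) ∨ q0 = (0, n + 1) := by
  have hT2 := erase_triangulation n T1 hT1 hmem
  obtain ⟨x, hx1, hx2, hex, hey⟩ := exists_fan (n + 3) _ hT2 (by omega)
  have hx2' : x < n + 2 := by omega
  rcases hex with hex | hex
  · rcases hey with hey | hey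
    · -- both diagonals: internal triangle in T1
      exfalso
      apply noint1 0 x (n + 2) ⟨by omega, by omega, Or.inl (Finset.mem_of_mem_erase hex),
        Or.inl (Finset.mem_of_mem_erase hey), Or.inl hmem⟩
      exact ⟨Finset.mem_of_mem_erase hex, Finset.mem_of_mem_erase hey, hmem⟩
    · -- (x, n+2) is a side of the (n+3)-gon : x = n+1
      refine ⟨(0, x), hex, Or.inr ?_⟩
      unfold IsSide at hey
      simp only at hey
      have : x = n + 1 := by omega
      rw [this]
  · -- (0, x) is a side : x = 1
    unfold IsSide at hex
    simp only at hex
    have hx : x = 1 := by omega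
    subst hx
    rcases hey with hey | hey
    · exact ⟨(1, n + 2), hey, Or.inl rfl⟩
    · unfold IsSide at hey
      simp only at hey
      omega

lemma nbr2_char (n : ℕ) (T1 : Finset (ℕ × ℕ))
    (hT1 : IsTriangulation (n + 4) T1) (hmem : (0, n + 2) ∈ T1)
    (noint1 : ∀ a b c : ℕ, IsTri (n + 4) T1 a b c →
      ¬((a, b) ∈ T1 ∧ (b, c) ∈ T1 ∧ (a, c) ∈ T1))
    (q0 : ℕ × ℕ) (hq0 : q0 = (1, n + 2) ∨ q0 = (0, n + 1))
    (hq0T : q0 ∈ T1.erase (0, n + 2))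
    (r : ℕ × ℕ) (hr : r ∈ T1.erase (0, n + 2))
    (h : QAdj (n + 3) (T1.erase (0, n + 2)) q0 r) :
    (q0 = (1, n + 2) ∧ (r = (1, n + 1) ∨ r = (2, n + 2))) ∨
    (q0 = (0, n + 1) ∧ (r = (0, n) ∨ r = (1, n + 1))) := by
  have hT2 := erase_triangulation n T1 hT1 hmem
  have noint2 := noint_erase n T1 hT1 hmem noint1
  obtain ⟨a, b, c, htri, hcs⟩ := qadj_cases (n + 3) _ noint2 q0 r hq0T hr h
  obtain ⟨hab, hbc, e1, e2, e3⟩ := htri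
  have hcm : c ≤ n + 2 := by
    have := edge_ub (n + 3) _ hT2.1 _ e2
    omega
  obtain ⟨hr1, hr2, hr3⟩ := hT2.1 r hr
  have hq01 : q0.1 = 1 ∧ q0.2 = n + 2 ∨ q0.1 = 0 ∧ q0.2 = n + 1 := by
    rcases hq0 with rfl | rfl
    · left; exact ⟨rfl, rfl⟩
    · right; exact ⟨rfl, rfl⟩
  have goal : (q0.1 = 1 ∧ q0.2 = n + 2) ∧ (r.1 = 1 ∧ r.2 = n + 1 ∨ r.1 = 2 ∧ r.2 = n + 2) ∨
      (q0.1 = 0 ∧ q0.2 = n + 1) ∧ (r.1 = 0 ∧ r.2 = n ∨ r.1 = 1 ∧ r.2 = n + 1) := by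
    rcases hcs with ⟨h1, h2, h3⟩ | ⟨h1, h2, h3⟩ | ⟨h1, h2, h3⟩ | ⟨h1, h2, h3⟩ | ⟨h1, h2, h3⟩ | ⟨h1, h2, h3⟩ <;>
      rw [Prod.ext_iff] at h1 <;> simp only at h1 <;>
      rw [Prod.ext_iff] at h2 <;> simp only at h2 <;>
      unfold IsSide at h3 <;> simp only at h3 <;> omega
  rcases goal with ⟨hg1, hg2⟩ | ⟨hg1, hg2⟩
  · left
    refine ⟨Prod.ext_iff.mpr hg1, ?_⟩
    rcases hg2 with hg | hg
    · exact Or.inl (Prod.ext_iff.mpr hg)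
    · exact Or.inr (Prod.ext_iff.mpr hg)
  · right
    refine ⟨Prod.ext_iff.mpr hg1, ?_⟩
    rcases hg2 with hg | hg
    · exact Or.inl (Prod.ext_iff.mpr hg)
    · exact Or.inr (Prod.ext_iff.mpr hg)

lemma nbr2_unique (n : ℕ) (T1 : Finset (ℕ × ℕ))
    (hT1 : IsTriangulation (n + 4) T1) (hmem : (0, n + 2) ∈ T1)
    (noint1 : ∀ a b c : ℕ, IsTri (n + 4) T1 a b c →
      ¬((a, b) ∈ T1 ∧ (b, c) ∈ T1 ∧ (a, c) ∈ T1))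
    (q0 : ℕ × ℕ) (hq0 : q0 = (1, n + 2) ∨ q0 = (0, n + 1))
    (hq0T : q0 ∈ T1.erase (0, n + 2))
    (r1 r2 : ℕ × ℕ) (hr1 : r1 ∈ T1.erase (0, n + 2)) (hr2 : r2 ∈ T1.erase (0, n + 2))
    (h1 : QAdj (n + 3) (T1.erase (0, n + 2)) q0 r1)
    (h2 : QAdj (n + 3) (T1.erase (0, n + 2)) q0 r2) : r1 = r2 := by
  have hT2 := erase_triangulation n T1 hT1 hmem
  have c1 := nbr2_char n T1 hT1 hmem noint1 q0 hq0 hq0T r1 hr1 h1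
  have c2 := nbr2_char n T1 hT1 hmem noint1 q0 hq0 hq0T r2 hr2 h2
  have hnc := hT2.2.1 r1 hr1 r2 hr2
  have hnc' := hT2.2.1 r2 hr2 r1 hr1
  obtain ⟨ha1, ha2, ha3⟩ := hT2.1 r1 hr1
  obtain ⟨hb1, hb2, hb3⟩ := hT2.1 r2 hr2
  unfold Cross at hnc hnc'
  by_contra hne
  have hne' : ¬(r1.1 = r2.1 ∧ r1.2 = r2.2) := fun hc => hne (Prod.ext_iff.mpr hc)
  rcases c1 with ⟨hq, hc1⟩ | ⟨hq, hc1⟩ <;> rcases c2 with ⟨hq', hc2⟩ | ⟨hq', hc2⟩ <;>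
    [skip; (rw [hq] at hq'; exact absurd (Prod.ext_iff.mp hq'.symm) (by simp));
     (rw [hq] at hq'; exact absurd (Prod.ext_iff.mp hq') (by simp)); skip] <;>
    rcases hc1 with rfl | rfl <;> rcases hc2 with rfl | rfl <;>
    first
      | exact hne rfl
      | (simp only at ha1 ha2 ha3 hb1 hb2 hb3 hnc hnc'; omega)

lemma step (n : ℕ) (T1 : Finset (ℕ × ℕ)) (hT1 : IsTriangulation (n + 4) T1)
    (hmem : (0, n + 2) ∈ T1)
    (noint1 : ∀ a b c : ℕ, IsTri (n + 4) T1 a b c →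
      ¬((a, b) ∈ T1 ∧ (b, c) ∈ T1 ∧ (a, c) ∈ T1))
    (hgood : Good (n + 3) n (T1.erase (0, n + 2))) : Good (n + 4) (n + 1) T1 := by
  obtain ⟨f2, hinj2, hmem2, hsurj2, hadj2⟩ := hgood
  rcases Nat.eq_zero_or_pos n with rfl | hn
  · -- n = 0 : T1 is a singleton {(0,2)}
    have hcard : T1.card = 1 := by have := hT1.2.2; omega
    obtain ⟨a, ha⟩ := Finset.card_eq_one.mp hcard
    have hae : a = (0, 2) := by
      have h := hmem; rw [ha, Finset.mem_singleton] at h; exact h.symm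
    subst hae
    refine ⟨fun _ => (0, 2), fun i j _ => Fin.ext (by omega), fun _ => hmem, ?_, ?_⟩
    · intro p hp; rw [ha, Finset.mem_singleton] at hp; exact ⟨0, hp.symm⟩
    · intro i j
      constructor
      · rintro ⟨hne, -⟩; exact absurd rfl hne
      · intro hc
        exfalso
        have hi := i.isLt
        have hj := j.isLt
        omega
  · obtain ⟨q0, hq0T, hq0⟩ := exists_q0 n T1 hn hT1 hmem noint1
    obtain ⟨i0, hi0⟩ := hsurj2 q0 hq0T
    have hmem2T1 : ∀ i, f2 i ∈ T1 := fun i => Finset.mem_of_mem_erase (hmem2 i)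
    have hne2 : ∀ i, f2 i ≠ (0, n + 2) := fun i => Finset.ne_of_mem_erase (hmem2 i)
    have hadjT1 : ∀ i j, QAdj (n + 4) T1 (f2 i) (f2 j) ↔ ((i : ℕ) + 1 = j ∨ (j : ℕ) + 1 = i) :=
      fun i j => ((qadj_equiv n T1 hT1 hmem _ _ (hmem2 i) (hmem2 j)).symm).trans (hadj2 i j)
    have hnb : ∀ q, q ∈ T1.erase (0, n + 2) → (QAdj (n + 4) T1 (0, n + 2) q ↔ q = q0) := by
      intro q hq
      constructor
      · intro h
        have hcand := nbr_char n T1 hT1 hmem noint1 q hq h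
        by_contra hne
        have hcr := hT1.2.1 q (Finset.mem_of_mem_erase hq) q0 (Finset.mem_of_mem_erase hq0T)
        rcases hcand with rfl | rfl <;> rcases hq0 with rfl | rfl
        · exact hne rfl
        · apply hcr; unfold Cross; simp only; omega
        · apply hcr; unfold Cross; simp only; omega
        · exact hne rfl
      · rintro rfl
        rcases hq0 with rfl | rfl
        · exact nbr_conv1 n T1 hmem (Finset.mem_of_mem_erase hq0T)
        · exact nbr_conv2 n T1 hmem (Finset.mem_of_mem_erase hq0T)
    have hadjP : ∀ i, QAdj (n + 4) T1 (0, n + 2) (f2 i) ↔ i = i0 := by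
      intro i
      rw [hnb (f2 i) (hmem2 i)]
      constructor
      · intro h; exact hinj2 (by rw [h, hi0])
      · rintro rfl; exact hi0
    have hi0end : (i0 : ℕ) = 0 ∨ (i0 : ℕ) = n - 1 := by
      by_contra hc
      push_neg at hc
      obtain ⟨hc1, hc2⟩ := hc
      have hlt := i0.isLt
      have ha : QAdj (n + 3) (T1.erase (0, n + 2)) (f2 i0) (f2 ⟨(i0 : ℕ) - 1, by omega⟩) :=
        (hadj2 i0 ⟨(i0 : ℕ) - 1, by omega⟩).mpr (by right; simp only; omega)
      have hb : QAdj (n + 3) (T1.erase (0, n + 2)) (f2 i0) (f2 ⟨(i0 : ℕ) + 1, by omega⟩) :=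
        (hadj2 i0 ⟨(i0 : ℕ) + 1, by omega⟩).mpr (by left; simp only)
      rw [hi0] at ha hb
      have heq := nbr2_unique n T1 hT1 hmem noint1 q0 hq0 hq0T _ _ (hmem2 _) (hmem2 _) ha hb
      have := hinj2 heq
      simp only [Fin.mk.injEq] at this
      omega
    -- reorder f2 so that q0 sits at index n - 1
    obtain ⟨f3, hinj3, hmem3, hsurj3, hadj3, hq0idx⟩ :
        ∃ f3 : Fin n → ℕ × ℕ, Function.Injective f3 ∧ (∀ i, f3 i ∈ T1.erase (0, n + 2)) ∧
          (∀ p ∈ T1.erase (0, n + 2), ∃ i, f3 i = p) ∧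
          (∀ i j, QAdj (n + 4) T1 (f3 i) (f3 j) ↔ ((i : ℕ) + 1 = j ∨ (j : ℕ) + 1 = i)) ∧
          f3 ⟨n - 1, by omega⟩ = q0 := by
      rcases hi0end with hi0e | hi0e
      · -- reverse
        refine ⟨fun k => f2 ⟨n - 1 - (k : ℕ), by omega⟩, ?_, fun i => hmem2 _, ?_, ?_, ?_⟩
        · intro i j hij
          have := hinj2 hij
          simp only [Fin.mk.injEq] at this
          have hi := i.isLt
          have hj := j.isLt
          exact Fin.ext (by omega)
        · intro p hp
          obtain ⟨i, hi⟩ := hsurj2 p hp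
          refine ⟨⟨n - 1 - (i : ℕ), by omega⟩, ?_⟩
          have hilt := i.isLt
          have heq : (⟨n - 1 - (n - 1 - (i : ℕ)), by omega⟩ : Fin n) = i := Fin.ext (by simp only; omega)
          try simp only
          rw [heq]
          exact hi
        · intro i j
          rw [hadjT1]
          try simp only
          have hi := i.isLt
          have hj := j.isLt
          omega
        · have heq : (⟨n - 1 - (n - 1 : ℕ), by omega⟩ : Fin n) = i0 := Fin.ext (by simp only; omega)
          try simp only
          rw [heq]
          exact hi0
      · refine ⟨f2, hinj2, hmem2, hsurj2, fun i j => hadjT1 i j, ?_⟩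
        have : (⟨n - 1, by omega⟩ : Fin n) = i0 := Fin.ext (by simp only; omega)
        rw [this]
        exact hi0
    have hadjP3 : ∀ i : Fin n, QAdj (n + 4) T1 (0, n + 2) (f3 i) ↔ (i : ℕ) = n - 1 := by
      intro i
      rw [hnb (f3 i) (hmem3 i)]
      constructor
      · intro h
        have : f3 i = f3 ⟨n - 1, by omega⟩ := by rw [h, hq0idx]
        have := hinj3 this
        rw [this]
      · intro h
        have : i = (⟨n - 1, by omega⟩ : Fin n) := Fin.ext (by simp only; omega)
        rw [this, hq0idx]
    -- assemble
    refine ⟨fun i => if h : (i : ℕ) < n then f3 ⟨i, h⟩ else (0, n + 2), ?_, ?_, ?_, ?_⟩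
    · intro i j hij
      simp only at hij
      by_cases hi : (i : ℕ) < n <;> by_cases hj : (j : ℕ) < n
      · rw [dif_pos hi, dif_pos hj] at hij
        have := hinj3 hij
        simp only [Fin.mk.injEq] at this
        exact Fin.ext this
      · rw [dif_pos hi, dif_neg hj] at hij
        exact absurd hij (Finset.ne_of_mem_erase (hmem3 ⟨i, hi⟩))
      · rw [dif_neg hi, dif_pos hj] at hij
        exact absurd hij.symm (Finset.ne_of_mem_erase (hmem3 ⟨j, hj⟩))
      · have h1 := i.isLt
        have h2 := j.isLt
        exact Fin.ext (by omega)
    · intro i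
      try simp only
      by_cases hi : (i : ℕ) < n
      · rw [dif_pos hi]; exact Finset.mem_of_mem_erase (hmem3 _)
      · rw [dif_neg hi]; exact hmem
    · intro p hp
      by_cases hpe : p = (0, n + 2)
      · refine ⟨⟨n, by omega⟩, ?_⟩
        try simp only
        rw [dif_neg (Nat.lt_irrefl n)]
        exact hpe.symm
      · obtain ⟨i, hi⟩ := hsurj3 p (Finset.mem_erase.mpr ⟨hpe, hp⟩)
        refine ⟨⟨(i : ℕ), by have := i.isLt; omega⟩, ?_⟩
        try simp only
        rw [dif_pos (show ((⟨(i : ℕ), by have := i.isLt; omega⟩ : Fin (n+1)) : ℕ) < n from i.isLt)]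
        have heq : (⟨(i : ℕ), i.isLt⟩ : Fin n) = i := Fin.ext rfl
        rw [heq]
        exact hi
    · intro i j
      try simp only
      by_cases hi : (i : ℕ) < n <;> by_cases hj : (j : ℕ) < n
      · rw [dif_pos hi, dif_pos hj, hadj3]
      · rw [dif_pos hi, dif_neg hj]
        have hjv : (j : ℕ) = n := by have := j.isLt; omega
        constructor
        · intro h
          have := (hadjP3 ⟨i, hi⟩).mp (qadj_symm _ _ _ _ h)
          simp only at this
          omega
        · intro h
          exact qadj_symm _ _ _ _ ((hadjP3 ⟨i, hi⟩).mpr (by simp only; omega))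
      · rw [dif_neg hi, dif_pos hj]
        have hiv : (i : ℕ) = n := by have := i.isLt; omega
        constructor
        · intro h
          have := (hadjP3 ⟨j, hj⟩).mp h
          simp only at this
          omega
        · intro h
          exact (hadjP3 ⟨j, hj⟩).mpr (by simp only; omega)
      · rw [dif_neg hi, dif_neg hj]
        constructor
        · rintro ⟨hne, -⟩; exact absurd rfl hne
        · intro h
          exfalso
          have h1 := i.isLt
          have h2 := j.isLt
          omega

theorem main_good : ∀ n : ℕ, ∀ T : Finset (ℕ × ℕ), IsTriangulation (n + 3) T →
    (∀ a b c : ℕ, IsTri (n + 3) T a b c → ¬((a, b) ∈ T ∧ (b, c) ∈ T ∧ (a, c) ∈ T)) →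
    Good (n + 3) n T := by
  intro n
  induction n with
  | zero =>
    intro T hT _
    have hempty : T = ∅ := Finset.card_eq_zero.mp (by have := hT.2.2; omega)
    subst hempty
    refine ⟨fun i => i.elim0, fun i => i.elim0, fun i => i.elim0, ?_, fun i => i.elim0⟩
    intro p hp
    simp at hp
  | succ n IH =>
    intro T hT hnoint
    obtain ⟨a, ha⟩ := exists_ear (n + 4) T hT (by omega)
    have hdiaga := hT.1 _ ha
    have haub : a ≤ n + 1 := by
      have := hdiaga.2.1
      simp only at this
      omega
    have hmem1 : ((a + (n + 1 - a) : ℕ), (a + 2 + (n + 1 - a) : ℕ)) ∈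
        (fun S => Finset.image (rot (n + 4)) S)^[n + 1 - a] T :=
      mem_iter (n + 4) a T ha (n + 1 - a) (by omega)
    have heq : ((a + (n + 1 - a) : ℕ), (a + 2 + (n + 1 - a) : ℕ)) = ((n + 4 - 3 : ℕ), (n + 4 - 1 : ℕ)) :=
      Prod.ext_iff.mpr ⟨by omega, by omega⟩
    rw [heq] at hmem1
    have hmem2 : ((0 : ℕ), (n + 4 - 2 : ℕ)) ∈
        ((fun S => Finset.image (rot (n + 4)) S)^[n + 1 - a] T).image (rot (n + 4)) :=
      mem_rot_top (n + 4) _ (by omega) hmem1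
    rw [show ((0 : ℕ), (n + 4 - 2 : ℕ)) = ((0 : ℕ), (n + 2 : ℕ)) from Prod.ext_iff.mpr ⟨rfl, by omega⟩] at hmem2
    have hmem3 : ((0 : ℕ), (n + 2 : ℕ)) ∈ (fun S => Finset.image (rot (n + 4)) S)^[(n + 1 - a) + 1] T := by
      rw [Function.iterate_succ_apply']
      exact hmem2
    have hT1 : IsTriangulation (n + 4) ((fun S => Finset.image (rot (n + 4)) S)^[(n + 1 - a) + 1] T) :=
      triangulation_iter (n + 4) _ T hT
    have noint1 := noint_iter (n + 4) ((n + 1 - a) + 1) T hT hnoint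
    have hT2 := erase_triangulation n _ hT1 hmem3
    have noint2 := noint_erase n _ hT1 hmem3 noint1
    have hgood2 := IH _ hT2 noint2
    have hgood1 := step n _ hT1 hmem3 noint1 hgood2
    exact good_rot_iter (n + 4) (n + 1) ((n + 1 - a) + 1) T hT hgood1

/-- If every triangle of an ideal triangulation `T` of the `(n+3)`-gon has at least one
boundary side (i.e. `T` has no internal triangle), then the underlying graph of the quiver
`Q(T)` is a path on `n` vertices, i.e. of Dynkin type `Aₙ`. -/
theorem stmt_17 (n : ℕ) (T : Finset (ℕ × ℕ)) (hT : IsTriangulation (n + 3) T)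
    (hnoint : ∀ a b c : ℕ, IsTri (n + 3) T a b c →
      ¬((a, b) ∈ T ∧ (b, c) ∈ T ∧ (a, c) ∈ T)) :
    ∃ f : Fin n → ℕ × ℕ, Function.Injective f ∧ (∀ i, f i ∈ T) ∧
      (∀ p ∈ T, ∃ i, f i = p) ∧
      ∀ i j : Fin n, QAdj (n + 3) T (f i) (f j) ↔ ((i : ℕ) + 1 = j ∨ (j : ℕ) + 1 = i) := by
  exact main_good n T hT hnoint
end
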